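/- arXiv:2503.13219 — 3 statements merged into one kernel-verified Lean document; each statement's English description precedes it below -/
import Mathlib

section
/- Let γ: [0,T)×[-1,1] → ℝⁿ be a smooth family of immersions, φ = ⟨∂_tγ, ∂_sγ⟩, V = ∂_tγ − φ∂_sγ, and let N be a smooth vector field along γ with ⟨N, ∂_sγ⟩ ≡ 0. Then for all (t,x): (a) ∂_t|∂_xγ| = (∂_sφ − ⟨κ, V⟩)|∂_xγ|; (b) for every smooth f: [0,T)×[-1,1] → ℝᵈ one has ∂_t(∂_s f) − ∂_s(∂_t f) = (⟨κ, V⟩ − ∂_sφ)∂_s f; (c) ∂_t∂_sγ = ∂_s^⊥V + φκ; (d) ∂_tN = ∂_t^⊥N − ⟨∂_s^⊥V + φκ, N⟩∂_sγ; (e) ∂_t^⊥κ = (∂_s^⊥)²V + ⟨κ, V⟩κ + φ∂_s^⊥κ; (f) (∂_t^⊥∂_s^⊥ − ∂_s^⊥∂_t^⊥)N = (⟨κ, V⟩ − ∂_sφ)∂_s^⊥N + ⟨κ, N⟩∂_s^⊥V − ⟨∂_s^⊥V, N⟩κ. -/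
open Set MeasureTheory Filter
open scoped RealInnerProductSpace

noncomputable section

variable {n : ℕ}

/-- Arc-length derivative along the curve `g` of a field `f`. -/
def aderiv {F : Type*} [NormedAddCommGroup F] [NormedSpace ℝ F]
    (g : ℝ → EuclideanSpace ℝ (Fin n)) (f : ℝ → F) : ℝ → F :=
  fun x => ‖deriv g x‖⁻¹ • deriv f x

/-- Unit tangent `∂ₛγ`. -/
def utang (g : ℝ → EuclideanSpace ℝ (Fin n)) : ℝ → EuclideanSpace ℝ (Fin n) :=
  aderiv g g

/-- Normal projection along `g`. -/
def nperp (g f : ℝ → EuclideanSpace ℝ (Fin n)) : ℝ → EuclideanSpace ℝ (Fin n) :=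
  fun x => f x - ⟪f x, utang g x⟫ • utang g x

/-- Curvature vector `κ = ∂ₛ²γ`. -/
def curvV (g : ℝ → EuclideanSpace ℝ (Fin n)) : ℝ → EuclideanSpace ℝ (Fin n) :=
  aderiv g (utang g)

/-- Projected arc-length derivative `∂ₛ^⊥`. -/
def aderivP (g f : ℝ → EuclideanSpace ℝ (Fin n)) : ℝ → EuclideanSpace ℝ (Fin n) :=
  nperp g (aderiv g f)

/-- Iterated projected arc-length derivative `(∂ₛ^⊥)^k`. -/
def aderivPIter (g : ℝ → EuclideanSpace ℝ (Fin n)) :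
    ℕ → (ℝ → EuclideanSpace ℝ (Fin n)) → ℝ → EuclideanSpace ℝ (Fin n)
  | 0, f => f
  | k + 1, f => aderivP g (aderivPIter g k f)

/-- Iterated full arc-length derivative `∂ₛ^k`. -/
def aderivIter (g : ℝ → EuclideanSpace ℝ (Fin n)) :
    ℕ → (ℝ → EuclideanSpace ℝ (Fin n)) → ℝ → EuclideanSpace ℝ (Fin n)
  | 0, f => f
  | k + 1, f => aderiv g (aderivIter g k f)

/-- Elastic energy `E(γ) = ∫ |κ|² ds`. -/
def elE (g : ℝ → EuclideanSpace ℝ (Fin n)) : ℝ :=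
  ∫ x in (-1:ℝ)..1, ‖curvV g x‖ ^ 2 * ‖deriv g x‖

/-- Length `L(γ) = ∫ ds`. -/
def elL (g : ℝ → EuclideanSpace ℝ (Fin n)) : ℝ :=
  ∫ x in (-1:ℝ)..1, ‖deriv g x‖

/-- Energy gradient `∇E(γ) = 2(∂ₛ^⊥)²κ + |κ|²κ`. -/
def gradElE (g : ℝ → EuclideanSpace ℝ (Fin n)) : ℝ → EuclideanSpace ℝ (Fin n) :=
  fun x => (2:ℝ) • aderivPIter g 2 (curvV g) x + ‖curvV g x‖ ^ 2 • curvV g x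

/-- Lagrange multiplier `λ(γ)`. -/
def lagMul (g : ℝ → EuclideanSpace ℝ (Fin n)) : ℝ :=
  (∫ x in (-1:ℝ)..1, ⟪gradElE g x, curvV g x⟫ * ‖deriv g x‖) / elE g

/-- Time derivative `∂ₜγ` of a family. -/
def timeD (γ : ℝ → ℝ → EuclideanSpace ℝ (Fin n)) : ℝ → ℝ → EuclideanSpace ℝ (Fin n) :=
  fun t x => deriv (fun s => γ s x) t

/-- Tangential speed `φ = ⟨∂ₜγ, ∂ₛγ⟩`. -/
def tanSpeed (γ : ℝ → ℝ → EuclideanSpace ℝ (Fin n)) : ℝ → ℝ → ℝ :=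
  fun t x => ⟪timeD γ t x, utang (γ t) x⟫

/-- Normal velocity `V = ∂ₜγ − φ ∂ₛγ`. -/
def normalVel (γ : ℝ → ℝ → EuclideanSpace ℝ (Fin n)) : ℝ → ℝ → EuclideanSpace ℝ (Fin n) :=
  fun t x => timeD γ t x - tanSpeed γ t x • utang (γ t) x

/-- Normal time derivative `∂ₜ^⊥N` of a field along the family γ. -/
def timeDPerp (γ N : ℝ → ℝ → EuclideanSpace ℝ (Fin n)) : ℝ → ℝ → EuclideanSpace ℝ (Fin n) :=
  fun t x => deriv (fun s => N s x) t
    - ⟪deriv (fun s => N s x) t, utang (γ t) x⟫ • utang (γ t) x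

/-- Shape operator `S_p = −Dξ(p)`. -/
def shapeOp (ξ : EuclideanSpace ℝ (Fin n) → EuclideanSpace ℝ (Fin n))
    (p v : EuclideanSpace ℝ (Fin n)) : EuclideanSpace ℝ (Fin n) :=
  -(fderiv ℝ ξ p v)

/-- `L²(ds)` norm of a field along `g`. -/
def l2ds (g f : ℝ → EuclideanSpace ℝ (Fin n)) : ℝ :=
  Real.sqrt (∫ x in (-1:ℝ)..1, ‖f x‖ ^ 2 * ‖deriv g x‖)

/-- Fixed-length free-boundary elastic flow on `[0,T)`. -/
def IsFLFBEF (T : ℝ) (ξ : EuclideanSpace ℝ (Fin n) → EuclideanSpace ℝ (Fin n))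
    (τ : ℝ → ℝ) (γ : ℝ → ℝ → EuclideanSpace ℝ (Fin n)) : Prop :=
  ContDiff ℝ (⊤ : ℕ∞) (fun p : ℝ × ℝ => γ p.1 p.2) ∧
  (∀ t ∈ Ico (0:ℝ) T, ∀ x ∈ Icc (-1:ℝ) 1, deriv (γ t) x ≠ 0) ∧
  (∀ t ∈ Ico (0:ℝ) T, 0 < elE (γ t)) ∧
  (∀ t ∈ Ico (0:ℝ) T, ∀ x ∈ Icc (-1:ℝ) 1,
    timeD γ t x = -(gradElE (γ t) x - lagMul (γ t) • curvV (γ t) x)) ∧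
  (∀ t ∈ Ico (0:ℝ) T, ∀ x ∈ ({-1, 1} : Set ℝ),
    ⟪timeD γ t x, utang (γ t) x⟫ = 0 ∧
    utang (γ t) x = τ x • ξ (γ t x) ∧
    ‖ξ (γ t x)‖ = 1 ∧
    aderivP (γ t) (curvV (γ t)) x = -(τ x • shapeOp ξ (γ t x) (curvV (γ t) x)))



section evolutionHelpers
open Filter Topology

variable {F : Type*} [NormedAddCommGroup F] [NormedSpace ℝ F]
variable {E : Type*} [NormedAddCommGroup E] [InnerProductSpace ℝ E]

/-- One-sided determination of `deriv` from values on an interval. -/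
theorem deriv_congr_Icc {A B : ℝ → F} {l u a : ℝ} (hlu : l < u) (ha : a ∈ Icc l u)
    (hA : DifferentiableAt ℝ A a) (hB : DifferentiableAt ℝ B a)
    (hAB : ∀ s ∈ Icc l u, A s = B s) : deriv A a = deriv B a := by
  rcases eq_or_lt_of_le ha.2 with h | h
  · -- a = u : work within Iic a
    have hmem : Icc l u ∈ 𝓝[Iic a] a := by
      refine mem_nhdsWithin.2 ⟨Ioi l, isOpen_Ioi, lt_of_lt_of_le hlu (h ▸ le_rfl), ?_⟩
      rintro s ⟨hs1, hs2⟩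
      exact ⟨le_of_lt hs1, h ▸ hs2⟩
    have hev : A =ᶠ[𝓝[Iic a] a] B := Filter.eventuallyEq_of_mem hmem hAB
    have h1 := hA.hasDerivAt.hasDerivWithinAt (s := Iic a)
    have h2 := (hB.hasDerivAt.hasDerivWithinAt (s := Iic a)).congr_of_eventuallyEq hev
      (hAB a ha)
    exact (uniqueDiffOn_Iic a a self_mem_Iic).eq_deriv _ h1 h2
  · have hmem : Icc l u ∈ 𝓝[Ici a] a := by
      refine mem_nhdsWithin.2 ⟨Iio u, isOpen_Iio, h, ?_⟩
      rintro s ⟨hs1, hs2⟩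
      exact ⟨le_trans ha.1 hs2, le_of_lt hs1⟩
    have hev : A =ᶠ[𝓝[Ici a] a] B := Filter.eventuallyEq_of_mem hmem hAB
    have h1 := hA.hasDerivAt.hasDerivWithinAt (s := Ici a)
    have h2 := (hB.hasDerivAt.hasDerivWithinAt (s := Ici a)).congr_of_eventuallyEq hev
      (hAB a ha)
    exact (uniqueDiffOn_Ici a a self_mem_Ici).eq_deriv _ h1 h2

theorem deriv_zero_Icc {A : ℝ → F} {l u a : ℝ} (hlu : l < u) (ha : a ∈ Icc l u)
    (hA : DifferentiableAt ℝ A a) (hAB : ∀ s ∈ Icc l u, A s = 0) : deriv A a = 0 := by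
  rw [deriv_congr_Icc hlu ha hA (differentiableAt_const 0) hAB]; simp

theorem HasDerivAt.norm' {c : ℝ → E} {c' : E} {a : ℝ} (h : HasDerivAt c c' a)
    (hne : c a ≠ 0) : HasDerivAt (fun s => ‖c s‖) (⟪c', c a⟫ / ‖c a‖) a := by
  have h1 : HasDerivAt (fun s => ⟪c s, c s⟫) (⟪c a, c'⟫ + ⟪c', c a⟫) a := h.inner ℝ h
  have h2 : (0:ℝ) ≠ ⟪c a, c a⟫ := by
    symm; simpa [real_inner_self_eq_norm_sq, pow_eq_zero_iff] using hne
  have h4 : HasDerivAt (fun s => Real.sqrt ⟪c s, c s⟫)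
      ((⟪c a, c'⟫ + ⟪c', c a⟫) / (2 * Real.sqrt ⟪c a, c a⟫)) a := by
    have := (Real.hasDerivAt_sqrt h2.symm).comp a h1
    exact this.congr_deriv (by ring)
  have h5 : (fun s => Real.sqrt ⟪c s, c s⟫) = fun s => ‖c s‖ := by
    funext s; rw [real_inner_self_eq_norm_sq]; exact Real.sqrt_sq (norm_nonneg _)
  rw [h5] at h4
  convert h4 using 1
  rw [real_inner_self_eq_norm_sq, Real.sqrt_sq (norm_nonneg _), real_inner_comm]
  ring

theorem hasDerivAt_slice2 {f : ℝ → ℝ → F} {t x : ℝ}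
    (hf : DifferentiableAt ℝ (fun p : ℝ × ℝ => f p.1 p.2) (t, x)) :
    HasDerivAt (f t) (fderiv ℝ (fun p : ℝ × ℝ => f p.1 p.2) (t, x) (0, 1)) x := by
  have h1 : HasDerivAt (fun y => ((t, y) : ℝ × ℝ)) (0, 1) x :=
    (hasDerivAt_const x t).prodMk (hasDerivAt_id x)
  exact (hf.hasFDerivAt.comp_hasDerivAt x h1 : _)

theorem hasDerivAt_slice1 {f : ℝ → ℝ → F} {t x : ℝ}
    (hf : DifferentiableAt ℝ (fun p : ℝ × ℝ => f p.1 p.2) (t, x)) :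
    HasDerivAt (fun s => f s x) (fderiv ℝ (fun p : ℝ × ℝ => f p.1 p.2) (t, x) (1, 0)) t := by
  have h1 : HasDerivAt (fun s => ((s, x) : ℝ × ℝ)) (1, 0) t :=
    (hasDerivAt_id t).prodMk (hasDerivAt_const t x)
  exact (hf.hasFDerivAt.comp_hasDerivAt t h1 : _)

/-- Eventually, the x-partial derivative is the fderiv applied to `(0,1)`. -/
theorem pd2_eventually_eq {f : ℝ → ℝ → F} {q : ℝ × ℝ}
    (hf : ContDiffAt ℝ (⊤ : ℕ∞) (fun p : ℝ × ℝ => f p.1 p.2) q) :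
    ∀ᶠ p in 𝓝 q, deriv (f p.1) p.2 = fderiv ℝ (fun p : ℝ × ℝ => f p.1 p.2) p (0, 1) := by
  have h1 : ∀ᶠ p in 𝓝 q, DifferentiableAt ℝ (fun p : ℝ × ℝ => f p.1 p.2) p := by
    have := (hf.of_le (show (1:WithTop ℕ∞) ≤ _ by norm_num)).eventually (by norm_num)
    exact this.mono fun p hp => hp.differentiableAt one_ne_zero
  exact h1.mono fun p hp => (hasDerivAt_slice2 (t := p.1) (x := p.2) (by simpa using hp)).deriv

theorem pd1_eventually_eq {f : ℝ → ℝ → F} {q : ℝ × ℝ}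
    (hf : ContDiffAt ℝ (⊤ : ℕ∞) (fun p : ℝ × ℝ => f p.1 p.2) q) :
    ∀ᶠ p in 𝓝 q, deriv (fun s => f s p.2) p.1
      = fderiv ℝ (fun p : ℝ × ℝ => f p.1 p.2) p (1, 0) := by
  have h1 : ∀ᶠ p in 𝓝 q, DifferentiableAt ℝ (fun p : ℝ × ℝ => f p.1 p.2) p := by
    have := (hf.of_le (show (1:WithTop ℕ∞) ≤ _ by norm_num)).eventually (by norm_num)
    exact this.mono fun p hp => hp.differentiableAt one_ne_zero
  exact h1.mono fun p hp => (hasDerivAt_slice1 (t := p.1) (x := p.2) (by simpa using hp)).deriv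

theorem contDiffAt_pd2 {f : ℝ → ℝ → F} {q : ℝ × ℝ}
    (hf : ContDiffAt ℝ (⊤ : ℕ∞) (fun p : ℝ × ℝ => f p.1 p.2) q) :
    ContDiffAt ℝ (⊤ : ℕ∞) (fun p : ℝ × ℝ => deriv (f p.1) p.2) q := by
  have h2 : ContDiffAt ℝ (⊤ : ℕ∞) (fderiv ℝ (fun p : ℝ × ℝ => f p.1 p.2)) q :=
    hf.fderiv_right (by norm_num)
  have h3 : ContDiffAt ℝ (⊤ : ℕ∞)
      (fun p : ℝ × ℝ => fderiv ℝ (fun p : ℝ × ℝ => f p.1 p.2) p (0, 1)) q :=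
    (ContinuousLinearMap.apply ℝ F ((0:ℝ), (1:ℝ))).contDiff.contDiffAt.comp q h2
  exact h3.congr_of_eventuallyEq (pd2_eventually_eq hf)

theorem contDiffAt_pd1 {f : ℝ → ℝ → F} {q : ℝ × ℝ}
    (hf : ContDiffAt ℝ (⊤ : ℕ∞) (fun p : ℝ × ℝ => f p.1 p.2) q) :
    ContDiffAt ℝ (⊤ : ℕ∞) (fun p : ℝ × ℝ => deriv (fun s => f s p.2) p.1) q := by
  have h2 : ContDiffAt ℝ (⊤ : ℕ∞) (fderiv ℝ (fun p : ℝ × ℝ => f p.1 p.2)) q :=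
    hf.fderiv_right (by norm_num)
  have h3 : ContDiffAt ℝ (⊤ : ℕ∞)
      (fun p : ℝ × ℝ => fderiv ℝ (fun p : ℝ × ℝ => f p.1 p.2) p (1, 0)) q :=
    (ContinuousLinearMap.apply ℝ F ((1:ℝ), (0:ℝ))).contDiff.contDiffAt.comp q h2
  exact h3.congr_of_eventuallyEq (pd1_eventually_eq hf)

/-- Clairaut/Schwarz for a smooth two-parameter family. -/
theorem deriv_comm {f : ℝ → ℝ → F} {t x : ℝ}
    (hf : ContDiffAt ℝ (⊤ : ℕ∞) (fun p : ℝ × ℝ => f p.1 p.2) (t, x)) :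
    deriv (fun s => deriv (f s) x) t = deriv (fun y => deriv (fun s => f s y) t) x := by
  set u : ℝ × ℝ → F := fun p => f p.1 p.2 with hu
  have hsymm := hf.isSymmSndFDerivAt (by
    rw [minSmoothness_of_isRCLikeNormedField]
    rw [show ((2:WithTop ℕ∞)) = ((2:ℕ∞):WithTop ℕ∞) from (WithTop.coe_ofNat _).symm]
    exact WithTop.coe_le_coe.2 le_top)
  have hfd : ContDiffAt ℝ (⊤ : ℕ∞) (fderiv ℝ u) (t, x) :=
    hf.fderiv_right (by norm_num)
  have hfd2 : HasFDerivAt (fderiv ℝ u) (fderiv ℝ (fderiv ℝ u) (t, x)) (t, x) :=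
    (hfd.differentiableAt (by norm_num)).hasFDerivAt
  -- LHS
  have e1 : (fun s => deriv (f s) x) =ᶠ[𝓝 t] fun s => fderiv ℝ u (s, x) (0, 1) := by
    have := pd2_eventually_eq hf
    have hc : ContinuousAt (fun s : ℝ => ((s, x) : ℝ × ℝ)) t := by fun_prop
    exact (hc.eventually this)
  have d1 : HasDerivAt (fun s => fderiv ℝ u (s, x) (0, 1))
      (fderiv ℝ (fderiv ℝ u) (t, x) (1, 0) (0, 1)) t := by
    have h1 : HasDerivAt (fun s => ((s, x) : ℝ × ℝ)) (1, 0) t :=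
      (hasDerivAt_id t).prodMk (hasDerivAt_const t x)
    have h2 : HasDerivAt (fun s => fderiv ℝ u (s, x))
        (fderiv ℝ (fderiv ℝ u) (t, x) (1, 0)) t := hfd2.comp_hasDerivAt t h1
    exact ((ContinuousLinearMap.apply ℝ F ((0:ℝ), (1:ℝ))).hasFDerivAt.comp_hasDerivAt t h2 : _)
  have e2 : (fun y => deriv (fun s => f s y) t) =ᶠ[𝓝 x] fun y => fderiv ℝ u (t, y) (1, 0) := by
    have := pd1_eventually_eq hf
    have hc : ContinuousAt (fun y : ℝ => ((t, y) : ℝ × ℝ)) x := by fun_prop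
    exact (hc.eventually this)
  have d2 : HasDerivAt (fun y => fderiv ℝ u (t, y) (1, 0))
      (fderiv ℝ (fderiv ℝ u) (t, x) (0, 1) (1, 0)) x := by
    have h1 : HasDerivAt (fun y => ((t, y) : ℝ × ℝ)) (0, 1) x :=
      (hasDerivAt_const x t).prodMk (hasDerivAt_id x)
    have h2 : HasDerivAt (fun y => fderiv ℝ u (t, y))
        (fderiv ℝ (fderiv ℝ u) (t, x) (0, 1)) x := hfd2.comp_hasDerivAt x h1
    exact ((ContinuousLinearMap.apply ℝ F ((1:ℝ), (0:ℝ))).hasFDerivAt.comp_hasDerivAt x h2 : _)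
  rw [e1.deriv_eq, e2.deriv_eq, d1.deriv, d2.deriv, hsymm.eq]

-- === slice helpers ===
section slices
variable {F : Type*} [NormedAddCommGroup F] [NormedSpace ℝ F]

theorem diffAt_slice1 {f : ℝ → ℝ → F} {t x : ℝ}
    (hf : ContDiffAt ℝ (⊤ : ℕ∞) (fun p : ℝ × ℝ => f p.1 p.2) (t, x)) :
    DifferentiableAt ℝ (fun s => f s x) t := by
  have h := (hf.differentiableAt (by norm_num)).comp t
    ((differentiableAt_id.prodMk (differentiableAt_const x)) :
      DifferentiableAt ℝ (fun s : ℝ => ((s, x) : ℝ × ℝ)) t)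
  exact h

theorem diffAt_slice2 {f : ℝ → ℝ → F} {t x : ℝ}
    (hf : ContDiffAt ℝ (⊤ : ℕ∞) (fun p : ℝ × ℝ => f p.1 p.2) (t, x)) :
    DifferentiableAt ℝ (fun y => f t y) x := by
  have h := (hf.differentiableAt (by norm_num)).comp x
    (((differentiableAt_const t).prodMk differentiableAt_id) :
      DifferentiableAt ℝ (fun y : ℝ => ((t, y) : ℝ × ℝ)) x)
  exact h

theorem hasD_slice1 {f : ℝ → ℝ → F} {t x : ℝ}
    (hf : ContDiffAt ℝ (⊤ : ℕ∞) (fun p : ℝ × ℝ => f p.1 p.2) (t, x)) :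
    HasDerivAt (fun s => f s x) (deriv (fun s => f s x) t) t :=
  (diffAt_slice1 hf).hasDerivAt

theorem hasD_slice2 {f : ℝ → ℝ → F} {t x : ℝ}
    (hf : ContDiffAt ℝ (⊤ : ℕ∞) (fun p : ℝ × ℝ => f p.1 p.2) (t, x)) :
    HasDerivAt (fun y => f t y) (deriv (fun y => f t y) x) x :=
  (diffAt_slice2 hf).hasDerivAt

end slices

-- === smoothness of the geometric quantities ===
section curve
variable {γ : ℝ → ℝ → EuclideanSpace ℝ (Fin n)} {t x : ℝ}

theorem cd_v (hγ : ContDiffAt ℝ (⊤ : ℕ∞) (fun p : ℝ × ℝ => γ p.1 p.2) (t, x)) :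
    ContDiffAt ℝ (⊤ : ℕ∞) (fun p : ℝ × ℝ => deriv (γ p.1) p.2) (t, x) :=
  contDiffAt_pd2 hγ

theorem ev_ne (hγ : ContDiffAt ℝ (⊤ : ℕ∞) (fun p : ℝ × ℝ => γ p.1 p.2) (t, x))
    (hd : deriv (γ t) x ≠ 0) :
    ∀ᶠ p in 𝓝 ((t, x) : ℝ × ℝ), deriv (γ p.1) p.2 ≠ 0 :=
  (cd_v hγ).continuousAt.eventually_ne hd

theorem cd_utang (hγ : ContDiffAt ℝ (⊤ : ℕ∞) (fun p : ℝ × ℝ => γ p.1 p.2) (t, x))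
    (hd : deriv (γ t) x ≠ 0) :
    ContDiffAt ℝ (⊤ : ℕ∞) (fun p : ℝ × ℝ => utang (γ p.1) p.2) (t, x) := by
  have hv := cd_v hγ
  exact (((hv.norm ℝ hd).inv (norm_ne_zero_iff.2 hd)).smul hv :)

theorem cd_aderiv {d : ℕ} {f : ℝ → ℝ → EuclideanSpace ℝ (Fin d)}
    (hγ : ContDiffAt ℝ (⊤ : ℕ∞) (fun p : ℝ × ℝ => γ p.1 p.2) (t, x))
    (hd : deriv (γ t) x ≠ 0)
    (hf : ContDiffAt ℝ (⊤ : ℕ∞) (fun p : ℝ × ℝ => f p.1 p.2) (t, x)) :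
    ContDiffAt ℝ (⊤ : ℕ∞) (fun p : ℝ × ℝ => aderiv (γ p.1) (f p.1) p.2) (t, x) := by
  have hv := cd_v hγ
  exact ((((hv.norm ℝ hd).inv (norm_ne_zero_iff.2 hd)).smul (contDiffAt_pd2 hf)) :)

theorem cd_curvV (hγ : ContDiffAt ℝ (⊤ : ℕ∞) (fun p : ℝ × ℝ => γ p.1 p.2) (t, x))
    (hd : deriv (γ t) x ≠ 0) :
    ContDiffAt ℝ (⊤ : ℕ∞) (fun p : ℝ × ℝ => curvV (γ p.1) p.2) (t, x) :=
  cd_aderiv (f := fun s => utang (γ s)) hγ hd (cd_utang hγ hd)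

theorem cd_timeD (hγ : ContDiffAt ℝ (⊤ : ℕ∞) (fun p : ℝ × ℝ => γ p.1 p.2) (t, x)) :
    ContDiffAt ℝ (⊤ : ℕ∞) (fun p : ℝ × ℝ => timeD γ p.1 p.2) (t, x) :=
  contDiffAt_pd1 hγ

theorem cd_tanSpeed (hγ : ContDiffAt ℝ (⊤ : ℕ∞) (fun p : ℝ × ℝ => γ p.1 p.2) (t, x))
    (hd : deriv (γ t) x ≠ 0) :
    ContDiffAt ℝ (⊤ : ℕ∞) (fun p : ℝ × ℝ => tanSpeed γ p.1 p.2) (t, x) :=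
  ((cd_timeD hγ).inner ℝ (cd_utang hγ hd) :)

theorem cd_normalVel (hγ : ContDiffAt ℝ (⊤ : ℕ∞) (fun p : ℝ × ℝ => γ p.1 p.2) (t, x))
    (hd : deriv (γ t) x ≠ 0) :
    ContDiffAt ℝ (⊤ : ℕ∞) (fun p : ℝ × ℝ => normalVel γ p.1 p.2) (t, x) :=
  ((cd_timeD hγ).sub ((cd_tanSpeed hγ hd).smul (cd_utang hγ hd)) :)

theorem cd_nperp {f : ℝ → ℝ → EuclideanSpace ℝ (Fin n)}
    (hγ : ContDiffAt ℝ (⊤ : ℕ∞) (fun p : ℝ × ℝ => γ p.1 p.2) (t, x))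
    (hd : deriv (γ t) x ≠ 0)
    (hf : ContDiffAt ℝ (⊤ : ℕ∞) (fun p : ℝ × ℝ => f p.1 p.2) (t, x)) :
    ContDiffAt ℝ (⊤ : ℕ∞) (fun p : ℝ × ℝ => nperp (γ p.1) (f p.1) p.2) (t, x) :=
  (hf.sub ((hf.inner ℝ (cd_utang hγ hd)).smul (cd_utang hγ hd)) :)

theorem cd_aderivP {f : ℝ → ℝ → EuclideanSpace ℝ (Fin n)}
    (hγ : ContDiffAt ℝ (⊤ : ℕ∞) (fun p : ℝ × ℝ => γ p.1 p.2) (t, x))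
    (hd : deriv (γ t) x ≠ 0)
    (hf : ContDiffAt ℝ (⊤ : ℕ∞) (fun p : ℝ × ℝ => f p.1 p.2) (t, x)) :
    ContDiffAt ℝ (⊤ : ℕ∞) (fun p : ℝ × ℝ => aderivP (γ p.1) (f p.1) p.2) (t, x) :=
  cd_nperp (f := fun s => aderiv (γ s) (f s)) hγ hd (cd_aderiv hγ hd hf)

theorem cd_timeDPerp {N : ℝ → ℝ → EuclideanSpace ℝ (Fin n)}
    (hγ : ContDiffAt ℝ (⊤ : ℕ∞) (fun p : ℝ × ℝ => γ p.1 p.2) (t, x))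
    (hd : deriv (γ t) x ≠ 0)
    (hN : ContDiffAt ℝ (⊤ : ℕ∞) (fun p : ℝ × ℝ => N p.1 p.2) (t, x)) :
    ContDiffAt ℝ (⊤ : ℕ∞) (fun p : ℝ × ℝ => timeDPerp γ N p.1 p.2) (t, x) :=
  ((contDiffAt_pd1 hN).sub (((contDiffAt_pd1 hN).inner ℝ (cd_utang hγ hd)).smul
    (cd_utang hγ hd)) :)

-- === pointwise algebraic facts ===
theorem inner_utang_self {g : ℝ → EuclideanSpace ℝ (Fin n)} {x : ℝ}
    (hd : deriv g x ≠ 0) : ⟪utang g x, utang g x⟫ = 1 := by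
  have h : ‖deriv g x‖ ≠ 0 := norm_ne_zero_iff.2 hd
  have h1 : ⟪utang g x, utang g x⟫
      = ‖deriv g x‖⁻¹ * (‖deriv g x‖⁻¹ * ⟪deriv g x, deriv g x⟫) := by
    simp only [utang, aderiv, real_inner_smul_left, real_inner_smul_right]
  rw [h1, real_inner_self_eq_norm_sq]
  field_simp

theorem inner_nperp_utang {g f : ℝ → EuclideanSpace ℝ (Fin n)} {x : ℝ}
    (hd : deriv g x ≠ 0) : ⟪nperp g f x, utang g x⟫ = 0 := by
  show ⟪f x - ⟪f x, utang g x⟫ • utang g x, utang g x⟫ = 0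
  rw [inner_sub_left, real_inner_smul_left, inner_utang_self hd, mul_one, sub_self]

theorem inner_normalVel_utang {γ : ℝ → ℝ → EuclideanSpace ℝ (Fin n)} {t x : ℝ}
    (hd : deriv (γ t) x ≠ 0) : ⟪normalVel γ t x, utang (γ t) x⟫ = 0 := by
  show ⟪timeD γ t x - tanSpeed γ t x • utang (γ t) x, utang (γ t) x⟫ = 0
  rw [inner_sub_left, real_inner_smul_left, inner_utang_self hd, mul_one]
  show ⟪timeD γ t x, utang (γ t) x⟫ - ⟪timeD γ t x, utang (γ t) x⟫ = 0
  exact sub_self _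

theorem inner_curvV_utang (hγ : ContDiffAt ℝ (⊤ : ℕ∞) (fun p : ℝ × ℝ => γ p.1 p.2) (t, x))
    (hd : deriv (γ t) x ≠ 0) : ⟪curvV (γ t) x, utang (γ t) x⟫ = 0 := by
  have hT : HasDerivAt (fun y => utang (γ t) y) (deriv (utang (γ t)) x) x :=
    hasD_slice2 (f := fun s => utang (γ s)) (cd_utang hγ hd)
  have h1 : (fun y => ⟪utang (γ t) y, utang (γ t) y⟫) =ᶠ[𝓝 x] fun _ => (1 : ℝ) := by
    have hev : ∀ᶠ y in 𝓝 x, deriv (γ t) y ≠ 0 := by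
      have hc : ContinuousAt (fun y : ℝ => ((t, y) : ℝ × ℝ)) x := by fun_prop
      exact hc.eventually (ev_ne hγ hd)
    exact hev.mono fun y hy => inner_utang_self hy
  have h2 : deriv (fun y => ⟪utang (γ t) y, utang (γ t) y⟫) x = 0 := by
    rw [h1.deriv_eq]; simp
  have h3 := (hT.inner ℝ hT).deriv
  rw [h2] at h3
  have h4 : ⟪deriv (utang (γ t)) x, utang (γ t) x⟫ = 0 := by
    have h5 := real_inner_comm (utang (γ t) x) (deriv (utang (γ t)) x)
    linarith
  show ⟪‖deriv (γ t) x‖⁻¹ • deriv (utang (γ t)) x, utang (γ t) x⟫ = 0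
  rw [real_inner_smul_left, h4, mul_zero]

end curve

section main
variable {γ : ℝ → ℝ → EuclideanSpace ℝ (Fin n)} {t x : ℝ}

theorem lemA (hγ : ContDiffAt ℝ (⊤ : ℕ∞) (fun p : ℝ × ℝ => γ p.1 p.2) (t, x))
    (hd : deriv (γ t) x ≠ 0) :
    HasDerivAt (fun s => ‖deriv (γ s) x‖)
      ((aderiv (γ t) (tanSpeed γ t) x - ⟪curvV (γ t) x, normalVel γ t x⟫)
        * ‖deriv (γ t) x‖) t := by
  have hr : ‖deriv (γ t) x‖ ≠ 0 := norm_ne_zero_iff.2 hd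
  have hv := cd_v hγ
  have hvx : HasDerivAt (fun s => deriv (γ s) x) (deriv (fun s => deriv (γ s) x) t) t :=
    hasD_slice1 (f := fun s y => deriv (γ s) y) hv
  have hw : deriv (fun s => deriv (γ s) x) t = deriv (fun y => timeD γ t y) x :=
    deriv_comm (f := γ) hγ
  have hTd : HasDerivAt (fun y => utang (γ t) y) (deriv (fun y => utang (γ t) y) x) x :=
    hasD_slice2 (f := fun s => utang (γ s)) (cd_utang hγ hd)
  have hDt : HasDerivAt (fun y => timeD γ t y) (deriv (fun y => timeD γ t y) x) x :=
    hasD_slice2 (f := fun s => timeD γ s) (cd_timeD hγ)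
  set dT := deriv (fun y => utang (γ t) y) x with hdT
  set A0 := deriv (fun y => timeD γ t y) x with hA0
  have hts : deriv (tanSpeed γ t) x = ⟪timeD γ t x, dT⟫ + ⟪A0, utang (γ t) x⟫ := by
    exact (hDt.inner ℝ hTd).deriv
  have e1 : aderiv (γ t) (tanSpeed γ t) x
      = ‖deriv (γ t) x‖⁻¹ * (⟪timeD γ t x, dT⟫ + ⟪A0, utang (γ t) x⟫) := by
    show ‖deriv (γ t) x‖⁻¹ • deriv (tanSpeed γ t) x = _
    rw [hts, smul_eq_mul]
  have ecv : curvV (γ t) x = ‖deriv (γ t) x‖⁻¹ • dT := by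
    show ‖deriv (γ t) x‖⁻¹ • deriv (utang (γ t)) x = _
    rw [hdT]
  have e2 : ⟪curvV (γ t) x, normalVel γ t x⟫ = ‖deriv (γ t) x‖⁻¹ * ⟪dT, timeD γ t x⟫ := by
    have h1 : ⟪curvV (γ t) x, normalVel γ t x⟫
        = ⟪curvV (γ t) x, timeD γ t x⟫
          - tanSpeed γ t x * ⟪curvV (γ t) x, utang (γ t) x⟫ := by
      show ⟪curvV (γ t) x, timeD γ t x - tanSpeed γ t x • utang (γ t) x⟫ = _
      rw [inner_sub_right, real_inner_smul_right]
    rw [h1, inner_curvV_utang hγ hd, mul_zero, sub_zero, ecv, real_inner_smul_left]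
  have e3 : ⟪A0, utang (γ t) x⟫ = ‖deriv (γ t) x‖⁻¹ * ⟪A0, deriv (γ t) x⟫ := by
    show ⟪A0, ‖deriv (γ t) x‖⁻¹ • deriv (γ t) x⟫ = _
    rw [real_inner_smul_right]
  have hnorm := hvx.norm' hd
  rw [hw] at hnorm
  convert hnorm using 1
  rw [e1, e2, e3, real_inner_comm (timeD γ t x) dT]
  field_simp
  ring

end main

section main2
variable {γ : ℝ → ℝ → EuclideanSpace ℝ (Fin n)} {t x : ℝ}

theorem lemB {d : ℕ} {f : ℝ → ℝ → EuclideanSpace ℝ (Fin d)}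
    (hγ : ContDiffAt ℝ (⊤ : ℕ∞) (fun p : ℝ × ℝ => γ p.1 p.2) (t, x))
    (hd : deriv (γ t) x ≠ 0)
    (hf : ContDiffAt ℝ (⊤ : ℕ∞) (fun p : ℝ × ℝ => f p.1 p.2) (t, x)) :
    HasDerivAt (fun s => aderiv (γ s) (f s) x)
      (aderiv (γ t) (fun y => deriv (fun s => f s y) t) x
        + (⟪curvV (γ t) x, normalVel γ t x⟫ - aderiv (γ t) (tanSpeed γ t) x)
          • aderiv (γ t) (f t) x) t := by
  have hr : ‖deriv (γ t) x‖ ≠ 0 := norm_ne_zero_iff.2 hd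
  have h1 := (lemA hγ hd).inv hr
  have h2 : HasDerivAt (fun s => deriv (f s) x) (deriv (fun s => deriv (f s) x) t) t :=
    hasD_slice1 (f := fun s y => deriv (f s) y) (contDiffAt_pd2 hf)
  have hcomm : deriv (fun s => deriv (f s) x) t
      = deriv (fun y => deriv (fun s => f s y) t) x := deriv_comm hf
  have h3 := h1.smul h2
  have hfun : (fun s => aderiv (γ s) (f s) x)
      = fun s => ‖deriv (γ s) x‖⁻¹ • deriv (f s) x := rfl
  rw [hfun]
  refine h3.congr_deriv ?_
  symm
  rw [hcomm] at h3 ⊢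
  show aderiv (γ t) (fun y => deriv (fun s => f s y) t) x
      + (⟪curvV (γ t) x, normalVel γ t x⟫ - aderiv (γ t) (tanSpeed γ t) x)
        • (‖deriv (γ t) x‖⁻¹ • deriv (f t) x)
    = ‖deriv (γ t) x‖⁻¹ • deriv (fun y => deriv (fun s => f s y) t) x
      + (-((aderiv (γ t) (tanSpeed γ t) x - ⟪curvV (γ t) x, normalVel γ t x⟫)
          * ‖deriv (γ t) x‖) / ‖deriv (γ t) x‖ ^ 2) • deriv (f t) x
  have e1 : aderiv (γ t) (fun y => deriv (fun s => f s y) t) x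
      = ‖deriv (γ t) x‖⁻¹ • deriv (fun y => deriv (fun s => f s y) t) x := rfl
  rw [e1]
  congr 1
  rw [smul_smul]
  congr 1
  field_simp
  ring

end main2

section main3
variable {γ : ℝ → ℝ → EuclideanSpace ℝ (Fin n)} {t x : ℝ}

/-- `⟪∂ₛV, T⟫ = −⟪V, κ⟫` at a point of nonvanishing. -/
theorem inner_aderiv_normalVel_utang
    (hγ : ContDiffAt ℝ (⊤ : ℕ∞) (fun p : ℝ × ℝ => γ p.1 p.2) (t, x))
    (hd : deriv (γ t) x ≠ 0) :
    ⟪aderiv (γ t) (normalVel γ t) x, utang (γ t) x⟫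
      = -⟪normalVel γ t x, curvV (γ t) x⟫ := by
  have hr : ‖deriv (γ t) x‖ ≠ 0 := norm_ne_zero_iff.2 hd
  have hTd : HasDerivAt (fun y => utang (γ t) y) (deriv (fun y => utang (γ t) y) x) x :=
    hasD_slice2 (f := fun s => utang (γ s)) (cd_utang hγ hd)
  have hVd : HasDerivAt (fun y => normalVel γ t y) (deriv (fun y => normalVel γ t y) x) x :=
    hasD_slice2 (f := fun s => normalVel γ s) (cd_normalVel hγ hd)
  have hev : ∀ᶠ y in 𝓝 x, deriv (γ t) y ≠ 0 := by
    have hc : ContinuousAt (fun y : ℝ => ((t, y) : ℝ × ℝ)) x := by fun_prop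
    exact hc.eventually (ev_ne hγ hd)
  have h1 : (fun y => ⟪normalVel γ t y, utang (γ t) y⟫) =ᶠ[𝓝 x] fun _ => (0 : ℝ) :=
    hev.mono fun y hy => inner_normalVel_utang hy
  have h2 : deriv (fun y => ⟪normalVel γ t y, utang (γ t) y⟫) x = 0 := by
    rw [h1.deriv_eq]; simp
  have h3 := (hVd.inner ℝ hTd).deriv
  rw [h2] at h3
  have ecv : curvV (γ t) x = ‖deriv (γ t) x‖⁻¹ • deriv (fun y => utang (γ t) y) x := rfl
  have e1 : aderiv (γ t) (normalVel γ t) x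
      = ‖deriv (γ t) x‖⁻¹ • deriv (fun y => normalVel γ t y) x := rfl
  rw [e1, ecv, real_inner_smul_left, real_inner_smul_right]
  have h4 : ⟪deriv (fun y => normalVel γ t y) x, utang (γ t) x⟫
      = -⟪normalVel γ t x, deriv (fun y => utang (γ t) y) x⟫ := by linarith
  rw [h4]
  ring

theorem lemC (hγ : ContDiffAt ℝ (⊤ : ℕ∞) (fun p : ℝ × ℝ => γ p.1 p.2) (t, x))
    (hd : deriv (γ t) x ≠ 0) :
    HasDerivAt (fun s => utang (γ s) x)
      (aderivP (γ t) (normalVel γ t) x + tanSpeed γ t x • curvV (γ t) x) t := by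
  have hr : ‖deriv (γ t) x‖ ≠ 0 := norm_ne_zero_iff.2 hd
  have hB := lemB (f := γ) hγ hd hγ
  have hfun : (fun s => aderiv (γ s) (γ s) x) = fun s => utang (γ s) x := rfl
  rw [hfun] at hB
  convert hB using 1
  -- identity between the two values
  have hTd : HasDerivAt (fun y => utang (γ t) y) (deriv (fun y => utang (γ t) y) x) x :=
    hasD_slice2 (f := fun s => utang (γ s)) (cd_utang hγ hd)
  have hVd : HasDerivAt (fun y => normalVel γ t y) (deriv (fun y => normalVel γ t y) x) x :=
    hasD_slice2 (f := fun s => normalVel γ s) (cd_normalVel hγ hd)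
  have hpd : HasDerivAt (fun y => tanSpeed γ t y) (deriv (fun y => tanSpeed γ t y) x) x :=
    hasD_slice2 (f := fun s => tanSpeed γ s) (cd_tanSpeed hγ hd)
  have hsplitfun : (fun y => deriv (fun s => γ s y) t)
      = fun y => normalVel γ t y + tanSpeed γ t y • utang (γ t) y := by
    funext y
    show timeD γ t y = _
    show timeD γ t y
      = (timeD γ t y - tanSpeed γ t y • utang (γ t) y) + tanSpeed γ t y • utang (γ t) y
    rw [sub_add_cancel]
  have hsplit : deriv (fun y => deriv (fun s => γ s y) t) x
      = deriv (fun y => normalVel γ t y) x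
        + (tanSpeed γ t x • deriv (fun y => utang (γ t) y) x
          + deriv (fun y => tanSpeed γ t y) x • utang (γ t) x) := by
    rw [hsplitfun]
    exact (hVd.add (hpd.smul hTd)).deriv
  have e0 : aderiv (γ t) (fun y => deriv (fun s => γ s y) t) x
      = ‖deriv (γ t) x‖⁻¹ • deriv (fun y => deriv (fun s => γ s y) t) x := rfl
  have e1 : aderiv (γ t) (normalVel γ t) x
      = ‖deriv (γ t) x‖⁻¹ • deriv (fun y => normalVel γ t y) x := rfl
  have eSF : aderiv (γ t) (tanSpeed γ t) x
      = ‖deriv (γ t) x‖⁻¹ * deriv (fun y => tanSpeed γ t y) x := rfl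
  have ecv : curvV (γ t) x = ‖deriv (γ t) x‖⁻¹ • deriv (fun y => utang (γ t) y) x := rfl
  have eSV : aderivP (γ t) (normalVel γ t) x
      = aderiv (γ t) (normalVel γ t) x
        - ⟪aderiv (γ t) (normalVel γ t) x, utang (γ t) x⟫ • utang (γ t) x := rfl
  have eTT : aderiv (γ t) (γ t) x = utang (γ t) x := rfl
  rw [eSV, inner_aderiv_normalVel_utang hγ hd, e0, hsplit]
  simp only [e1, ecv, eTT, eSF, real_inner_smul_left, real_inner_smul_right, smul_smul,
    smul_add, neg_smul, sub_eq_add_neg]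
  rw [real_inner_comm (normalVel γ t x) (deriv (fun y => utang (γ t) y) x)]
  match_scalars <;> ring
end main3

section main4
variable {γ N : ℝ → ℝ → EuclideanSpace ℝ (Fin n)} {t x l u : ℝ}

theorem lemD_scalar
    (hγ : ContDiffAt ℝ (⊤ : ℕ∞) (fun p : ℝ × ℝ => γ p.1 p.2) (t, x))
    (hd : deriv (γ t) x ≠ 0)
    (hN : ContDiffAt ℝ (⊤ : ℕ∞) (fun p : ℝ × ℝ => N p.1 p.2) (t, x))
    (hlu : l < u) (ht : t ∈ Icc l u)
    (hNn : ∀ s ∈ Icc l u, ⟪N s x, utang (γ s) x⟫ = 0) :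
    ⟪deriv (fun s => N s x) t, utang (γ t) x⟫
      = -⟪aderivP (γ t) (normalVel γ t) x + tanSpeed γ t x • curvV (γ t) x, N t x⟫ := by
  have hNd : HasDerivAt (fun s => N s x) (deriv (fun s => N s x) t) t :=
    hasD_slice1 (f := N) hN
  have hTt := lemC hγ hd
  have h0 : deriv (fun s => ⟪N s x, utang (γ s) x⟫) t = 0 :=
    deriv_zero_Icc hlu ht (hNd.inner ℝ hTt).differentiableAt hNn
  have h1 := (hNd.inner ℝ hTt).deriv
  rw [h0] at h1
  have h2 := real_inner_comm (N t x)
    (aderivP (γ t) (normalVel γ t) x + tanSpeed γ t x • curvV (γ t) x)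
  linarith

theorem lemD
    (hγ : ContDiffAt ℝ (⊤ : ℕ∞) (fun p : ℝ × ℝ => γ p.1 p.2) (t, x))
    (hd : deriv (γ t) x ≠ 0)
    (hN : ContDiffAt ℝ (⊤ : ℕ∞) (fun p : ℝ × ℝ => N p.1 p.2) (t, x))
    (hlu : l < u) (ht : t ∈ Icc l u)
    (hNn : ∀ s ∈ Icc l u, ⟪N s x, utang (γ s) x⟫ = 0) :
    deriv (fun s => N s x) t
      = timeDPerp γ N t x
        - ⟪aderivP (γ t) (normalVel γ t) x + tanSpeed γ t x • curvV (γ t) x, N t x⟫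
            • utang (γ t) x := by
  have hs := lemD_scalar hγ hd hN hlu ht hNn
  show deriv (fun s => N s x) t
      = (deriv (fun s => N s x) t
          - ⟪deriv (fun s => N s x) t, utang (γ t) x⟫ • utang (γ t) x) - _
  rw [hs, neg_smul, sub_neg_eq_add]
  abel

theorem lemE
    (hγ : ContDiff ℝ (⊤ : ℕ∞) (fun p : ℝ × ℝ => γ p.1 p.2))
    (hd : deriv (γ t) x ≠ 0) :
    timeDPerp γ (fun s => curvV (γ s)) t x
      = aderivPIter (γ t) 2 (normalVel γ t) x
        + ⟪curvV (γ t) x, normalVel γ t x⟫ • curvV (γ t) x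
        + tanSpeed γ t x • aderivP (γ t) (curvV (γ t)) x := by
  have hγt : ContDiffAt ℝ (⊤ : ℕ∞) (fun p : ℝ × ℝ => γ p.1 p.2) (t, x) := hγ.contDiffAt
  have hr : ‖deriv (γ t) x‖ ≠ 0 := norm_ne_zero_iff.2 hd
  have hB := lemB (f := fun s => utang (γ s)) hγt hd (cd_utang hγt hd)
  have hev : ∀ᶠ y in 𝓝 x, deriv (γ t) y ≠ 0 := by
    have hc : ContinuousAt (fun y : ℝ => ((t, y) : ℝ × ℝ)) x := by fun_prop
    exact hc.eventually (ev_ne hγt hd)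
  have hWev : (fun y => deriv (fun s => utang (γ s) y) t)
      =ᶠ[𝓝 x] fun y => aderivP (γ t) (normalVel γ t) y
        + tanSpeed γ t y • curvV (γ t) y :=
    hev.mono fun y hy => (lemC hγ.contDiffAt hy).deriv
  have hSVd : HasDerivAt (fun y => aderivP (γ t) (normalVel γ t) y)
      (deriv (fun y => aderivP (γ t) (normalVel γ t) y) x) x :=
    hasD_slice2 (f := fun s => aderivP (γ s) (normalVel γ s))
      (cd_aderivP hγt hd (cd_normalVel hγt hd))
  have hKd : HasDerivAt (fun y => curvV (γ t) y) (deriv (fun y => curvV (γ t) y) x) x :=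
    hasD_slice2 (f := fun s => curvV (γ s)) (cd_curvV hγt hd)
  have hpd : HasDerivAt (fun y => tanSpeed γ t y) (deriv (fun y => tanSpeed γ t y) x) x :=
    hasD_slice2 (f := fun s => tanSpeed γ s) (cd_tanSpeed hγt hd)
  have hdW : deriv (fun y => deriv (fun s => utang (γ s) y) t) x
      = deriv (fun y => aderivP (γ t) (normalVel γ t) y) x
        + (tanSpeed γ t x • deriv (fun y => curvV (γ t) y) x
          + deriv (fun y => tanSpeed γ t y) x • curvV (γ t) x) := by
    rw [hWev.deriv_eq]
    exact (hSVd.add (hpd.smul hKd)).deriv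
  have hDval : deriv (fun s => curvV (γ s) x) t
      = aderiv (γ t) (fun y => deriv (fun s => utang (γ s) y) t) x
        + (⟪curvV (γ t) x, normalVel γ t x⟫ - aderiv (γ t) (tanSpeed γ t) x)
          • curvV (γ t) x := hB.deriv
  show deriv (fun s => curvV (γ s) x) t
      - ⟪deriv (fun s => curvV (γ s) x) t, utang (γ t) x⟫ • utang (γ t) x = _
  have e0 : aderiv (γ t) (fun y => deriv (fun s => utang (γ s) y) t) x
      = ‖deriv (γ t) x‖⁻¹ • deriv (fun y => deriv (fun s => utang (γ s) y) t) x := rfl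
  have eIter : aderivPIter (γ t) 2 (normalVel γ t) x
      = aderiv (γ t) (fun y => aderivP (γ t) (normalVel γ t) y) x
        - ⟪aderiv (γ t) (fun y => aderivP (γ t) (normalVel γ t) y) x, utang (γ t) x⟫
            • utang (γ t) x := rfl
  have eP : aderivP (γ t) (curvV (γ t)) x
      = aderiv (γ t) (curvV (γ t)) x
        - ⟪aderiv (γ t) (curvV (γ t)) x, utang (γ t) x⟫ • utang (γ t) x := rfl
  have e1 : aderiv (γ t) (fun y => aderivP (γ t) (normalVel γ t) y) x
      = ‖deriv (γ t) x‖⁻¹ • deriv (fun y => aderivP (γ t) (normalVel γ t) y) x := rfl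
  have e2 : aderiv (γ t) (curvV (γ t)) x
      = ‖deriv (γ t) x‖⁻¹ • deriv (fun y => curvV (γ t) y) x := rfl
  have eSF : aderiv (γ t) (tanSpeed γ t) x
      = ‖deriv (γ t) x‖⁻¹ * deriv (fun y => tanSpeed γ t y) x := rfl
  rw [hDval, e0, hdW, eIter, eP, e1, e2, eSF]
  simp only [smul_add, smul_smul, inner_add_left, real_inner_smul_left,
    inner_curvV_utang hγt hd]
  match_scalars <;> ring
end main4

section main5
variable {γ N : ℝ → ℝ → EuclideanSpace ℝ (Fin n)} {t x l u a b : ℝ}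

theorem lemF
    (hγ : ContDiff ℝ (⊤ : ℕ∞) (fun p : ℝ × ℝ => γ p.1 p.2))
    (hN : ContDiff ℝ (⊤ : ℕ∞) (fun p : ℝ × ℝ => N p.1 p.2))
    (hd : deriv (γ t) x ≠ 0)
    (hlu : l < u) (ht : t ∈ Icc l u)
    (hab : a < b) (hx : x ∈ Icc a b)
    (hNnT : ∀ s ∈ Icc l u, ⟪N s x, utang (γ s) x⟫ = 0)
    (hNnX : ∀ y ∈ Icc a b, ⟪N t y, utang (γ t) y⟫ = 0) :
    timeDPerp γ (fun s => aderivP (γ s) (N s)) t x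
        - aderivP (γ t) (fun y => timeDPerp γ N t y) x
      = (⟪curvV (γ t) x, normalVel γ t x⟫ - aderiv (γ t) (tanSpeed γ t) x)
          • aderivP (γ t) (N t) x
        + ⟪curvV (γ t) x, N t x⟫ • aderivP (γ t) (normalVel γ t) x
        - ⟪aderivP (γ t) (normalVel γ t) x, N t x⟫ • curvV (γ t) x := by
  have hγt : ContDiffAt ℝ (⊤ : ℕ∞) (fun p : ℝ × ℝ => γ p.1 p.2) (t, x) := hγ.contDiffAt
  have hNt : ContDiffAt ℝ (⊤ : ℕ∞) (fun p : ℝ × ℝ => N p.1 p.2) (t, x) := hN.contDiffAt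
  have hr : ‖deriv (γ t) x‖ ≠ 0 := norm_ne_zero_iff.2 hd
  have hTt := lemC hγt hd
  have hB := lemB (f := N) hγt hd hNt
  have hscal := hB.inner ℝ hTt
  -- time derivative of  s ↦ ∂ₛ^⊥N (s,x)
  have hDtP : deriv (fun s => aderivP (γ s) (N s) x) t
      = (aderiv (γ t) (fun y => deriv (fun s => N s y) t) x
          + (⟪curvV (γ t) x, normalVel γ t x⟫ - aderiv (γ t) (tanSpeed γ t) x)
            • aderiv (γ t) (N t) x)
        - (⟪aderiv (γ t) (N t) x, utang (γ t) x⟫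
            • (aderivP (γ t) (normalVel γ t) x + tanSpeed γ t x • curvV (γ t) x)
          + (⟪aderiv (γ t) (N t) x,
                aderivP (γ t) (normalVel γ t) x + tanSpeed γ t x • curvV (γ t) x⟫
              + ⟪aderiv (γ t) (fun y => deriv (fun s => N s y) t) x
                  + (⟪curvV (γ t) x, normalVel γ t x⟫ - aderiv (γ t) (tanSpeed γ t) x)
                    • aderiv (γ t) (N t) x, utang (γ t) x⟫)
            • utang (γ t) x) := by
    exact (hB.sub (hscal.smul hTt)).deriv
  -- spatial derivative of t-slice of ∂ₜN, rewritten through ∂ₜ^⊥N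
  have hMd : HasDerivAt (fun y => timeDPerp γ N t y)
      (deriv (fun y => timeDPerp γ N t y) x) x :=
    hasD_slice2 (f := fun s y => timeDPerp γ N s y) (cd_timeDPerp hγt hd hNt)
  have hc2d : HasDerivAt (fun y => ⟪deriv (fun s => N s y) t, utang (γ t) y⟫)
      (deriv (fun y => ⟪deriv (fun s => N s y) t, utang (γ t) y⟫) x) x :=
    hasD_slice2 (f := fun s y => ⟪deriv (fun u => N u y) s, utang (γ s) y⟫)
      ((contDiffAt_pd1 hNt).inner ℝ (cd_utang hγt hd))
  have hTd : HasDerivAt (fun y => utang (γ t) y) (deriv (fun y => utang (γ t) y) x) x :=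
    hasD_slice2 (f := fun s => utang (γ s)) (cd_utang hγt hd)
  have hsplitfun : (fun y => deriv (fun s => N s y) t)
      = fun y => timeDPerp γ N t y
          + ⟪deriv (fun s => N s y) t, utang (γ t) y⟫ • utang (γ t) y := by
    funext y
    show deriv (fun s => N s y) t
      = (deriv (fun s => N s y) t
          - ⟪deriv (fun s => N s y) t, utang (γ t) y⟫ • utang (γ t) y)
        + ⟪deriv (fun s => N s y) t, utang (γ t) y⟫ • utang (γ t) y
    rw [sub_add_cancel]
  have hdDtN : deriv (fun y => deriv (fun s => N s y) t) x
      = deriv (fun y => timeDPerp γ N t y) x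
        + (⟪deriv (fun s => N s x) t, utang (γ t) x⟫ • deriv (fun y => utang (γ t) y) x
          + deriv (fun y => ⟪deriv (fun s => N s y) t, utang (γ t) y⟫) x
            • utang (γ t) x) := by
    rw [hsplitfun]
    exact (hMd.add (hc2d.smul hTd)).deriv
  -- scalar facts
  have hNd : HasDerivAt (fun y => N t y) (deriv (fun y => N t y) x) x :=
    hasD_slice2 (f := N) hNt
  have h5 : ⟪deriv (fun y => N t y) x, utang (γ t) x⟫
      = -⟪deriv (fun y => utang (γ t) y) x, N t x⟫ := by
    have h0 : deriv (fun y => ⟪N t y, utang (γ t) y⟫) x = 0 :=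
      deriv_zero_Icc hab hx (hNd.inner ℝ hTd).differentiableAt hNnX
    have h1 := (hNd.inner ℝ hTd).deriv
    rw [h0] at h1
    have h2 := real_inner_comm (N t x) (deriv (fun y => utang (γ t) y) x)
    linarith
  have h6 : ⟪deriv (fun s => N s x) t, utang (γ t) x⟫
      = -⟪aderivP (γ t) (normalVel γ t) x + tanSpeed γ t x • curvV (γ t) x, N t x⟫ :=
    lemD_scalar hγt hd hNt hlu ht hNnT
  -- unfold the goal
  show (deriv (fun s => aderivP (γ s) (N s) x) t
      - ⟪deriv (fun s => aderivP (γ s) (N s) x) t, utang (γ t) x⟫ • utang (γ t) x)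
      - (aderiv (γ t) (fun y => timeDPerp γ N t y) x
        - ⟪aderiv (γ t) (fun y => timeDPerp γ N t y) x, utang (γ t) x⟫ • utang (γ t) x)
    = _
  have eAN : aderiv (γ t) (N t) x
      = ‖deriv (γ t) x‖⁻¹ • deriv (fun y => N t y) x := rfl
  have eA2 : aderiv (γ t) (fun y => deriv (fun s => N s y) t) x
      = ‖deriv (γ t) x‖⁻¹ • deriv (fun y => deriv (fun s => N s y) t) x := rfl
  have eM1 : aderiv (γ t) (fun y => timeDPerp γ N t y) x
      = ‖deriv (γ t) x‖⁻¹ • deriv (fun y => timeDPerp γ N t y) x := rfl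
  have ecv : curvV (γ t) x = ‖deriv (γ t) x‖⁻¹ • deriv (fun y => utang (γ t) y) x := rfl
  have ePP : aderivP (γ t) (N t) x
      = aderiv (γ t) (N t) x
        - ⟪aderiv (γ t) (N t) x, utang (γ t) x⟫ • utang (γ t) x := rfl
  have eSVT : ⟪aderivP (γ t) (normalVel γ t) x, utang (γ t) x⟫ = 0 :=
    inner_nperp_utang hd
  have eKT : ⟪deriv (fun y => utang (γ t) y) x, utang (γ t) x⟫ = 0 := by
    have h0 := inner_curvV_utang hγt hd
    rw [ecv, real_inner_smul_left] at h0
    rcases mul_eq_zero.1 h0 with h | h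
    · exact absurd h (inv_ne_zero hr)
    · exact h
  have eTT : ⟪utang (γ t) x, utang (γ t) x⟫ = 1 := inner_utang_self hd
  rw [hDtP, eA2, hdDtN, ePP, eM1, eAN, h6, ecv]
  simp only [inner_add_left, inner_add_right, inner_sub_left, inner_sub_right,
    real_inner_smul_left, real_inner_smul_right, smul_add, smul_sub, smul_smul,
    eSVT, eKT, eTT, h5, h6]
  match_scalars <;> ring
end main5

end evolutionHelpers

/-- the evolution equations (a)–(f) of Lemma 2.1. -/
theorem statement0
    (n : ℕ) (hn : 2 ≤ n) (T : ℝ) (hT : 0 < T)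
    (γ : ℝ → ℝ → EuclideanSpace ℝ (Fin n))
    (hγ : ContDiff ℝ (⊤ : ℕ∞) (fun p : ℝ × ℝ => γ p.1 p.2))
    (himm : ∀ t ∈ Ico (0:ℝ) T, ∀ x ∈ Icc (-1:ℝ) 1, deriv (γ t) x ≠ 0)
    (N : ℝ → ℝ → EuclideanSpace ℝ (Fin n))
    (hN : ContDiff ℝ (⊤ : ℕ∞) (fun p : ℝ × ℝ => N p.1 p.2))
    (hNnormal : ∀ t ∈ Ico (0:ℝ) T, ∀ x ∈ Icc (-1:ℝ) 1, ⟪N t x, utang (γ t) x⟫ = 0) :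
    ∀ t ∈ Ico (0:ℝ) T, ∀ x ∈ Icc (-1:ℝ) 1,
      -- (a)  ∂ₜ|∂ₓγ| = (∂ₛφ − ⟨κ, V⟩)|∂ₓγ|
      (deriv (fun s => ‖deriv (γ s) x‖) t
        = (aderiv (γ t) (tanSpeed γ t) x - ⟪curvV (γ t) x, normalVel γ t x⟫)
            * ‖deriv (γ t) x‖) ∧
      -- (b)  ∂ₜ(∂ₛ f) − ∂ₛ(∂ₜ f) = (⟨κ, V⟩ − ∂ₛφ)∂ₛ f
      (∀ (d : ℕ) (f : ℝ → ℝ → EuclideanSpace ℝ (Fin d)),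
        ContDiff ℝ (⊤ : ℕ∞) (fun p : ℝ × ℝ => f p.1 p.2) →
        deriv (fun s => aderiv (γ s) (f s) x) t
            - aderiv (γ t) (fun y => deriv (fun s => f s y) t) x
          = (⟪curvV (γ t) x, normalVel γ t x⟫ - aderiv (γ t) (tanSpeed γ t) x)
              • aderiv (γ t) (f t) x) ∧
      -- (c)  ∂ₜ∂ₛγ = ∂ₛ^⊥V + φκ
      (deriv (fun s => utang (γ s) x) t
        = aderivP (γ t) (normalVel γ t) x + tanSpeed γ t x • curvV (γ t) x) ∧
      -- (d)  ∂ₜN = ∂ₜ^⊥N − ⟨∂ₛ^⊥V + φκ, N⟩∂ₛγ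
      (deriv (fun s => N s x) t
        = timeDPerp γ N t x
          - ⟪aderivP (γ t) (normalVel γ t) x + tanSpeed γ t x • curvV (γ t) x, N t x⟫
              • utang (γ t) x) ∧
      -- (e)  ∂ₜ^⊥κ = (∂ₛ^⊥)²V + ⟨κ, V⟩κ + φ∂ₛ^⊥κ
      (timeDPerp γ (fun s => curvV (γ s)) t x
        = aderivPIter (γ t) 2 (normalVel γ t) x
          + ⟪curvV (γ t) x, normalVel γ t x⟫ • curvV (γ t) x
          + tanSpeed γ t x • aderivP (γ t) (curvV (γ t)) x) ∧
      -- (f)  (∂ₜ^⊥∂ₛ^⊥ − ∂ₛ^⊥∂ₜ^⊥)N = (⟨κ,V⟩ − ∂ₛφ)∂ₛ^⊥N + ⟨κ,N⟩∂ₛ^⊥V − ⟨∂ₛ^⊥V,N⟩κ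
      (timeDPerp γ (fun s => aderivP (γ s) (N s)) t x
          - aderivP (γ t) (fun y => timeDPerp γ N t y) x
        = (⟪curvV (γ t) x, normalVel γ t x⟫ - aderiv (γ t) (tanSpeed γ t) x)
            • aderivP (γ t) (N t) x
          + ⟪curvV (γ t) x, N t x⟫ • aderivP (γ t) (normalVel γ t) x
          - ⟪aderivP (γ t) (normalVel γ t) x, N t x⟫ • curvV (γ t) x) := by
  intro t ht x hx
  have hd : deriv (γ t) x ≠ 0 := himm t ht x hx
  have hγt : ContDiffAt ℝ (⊤ : ℕ∞) (fun p : ℝ × ℝ => γ p.1 p.2) (t, x) := hγ.contDiffAt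
  have hNt : ContDiffAt ℝ (⊤ : ℕ∞) (fun p : ℝ × ℝ => N p.1 p.2) (t, x) := hN.contDiffAt
  have hlu : (0:ℝ) < (t + T) / 2 := by
    have h1 := ht.1
    have h2 := ht.2
    simp only [Set.mem_Ico] at *
    linarith
  have htm : t ∈ Icc (0:ℝ) ((t + T) / 2) := by
    have h1 := ht.1
    have h2 := ht.2
    exact ⟨h1, by linarith⟩
  have hsub : Icc (0:ℝ) ((t + T) / 2) ⊆ Ico (0:ℝ) T := by
    have h2 := ht.2
    intro s hs
    exact ⟨hs.1, lt_of_le_of_lt hs.2 (by linarith)⟩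
  have hNnT : ∀ s ∈ Icc (0:ℝ) ((t + T) / 2), ⟪N s x, utang (γ s) x⟫ = 0 :=
    fun s hs => hNnormal s (hsub hs) x hx
  have hNnX : ∀ y ∈ Icc (-1:ℝ) 1, ⟪N t y, utang (γ t) y⟫ = 0 :=
    fun y hy => hNnormal t ht y hy
  refine ⟨(lemA hγt hd).deriv, ?_, (lemC hγt hd).deriv,
    lemD hγt hd hNt hlu htm hNnT, lemE hγ hd,
    lemF hγ hN hd hlu htm (by norm_num : (-1:ℝ) < 1) hx hNnT hNnX⟩
  intro d f hf
  rw [(lemB hγt hd hf.contDiffAt).deriv, add_sub_cancel_left]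

end
end

section
/- Let γ: [0,T)×[-1,1] → ℝⁿ be a smooth family of immersions, φ = ⟨∂_tγ, ∂_sγ⟩ and V = ∂_tγ − φ∂_sγ. Then for every t ∈ [0,T): d/dt E(γ(t,·)) = ∫_{-1}^{1} ⟨2(∂_s^⊥)²κ + |κ|²κ, V⟩ ds + [ 2⟨κ, ∂_s^⊥V⟩ − 2⟨∂_s^⊥κ, V⟩ + φ|κ|² ]_{x=−1}^{x=1}, where [F]_{x=−1}^{x=1} = F(t,1) − F(t,−1). -/
open Set MeasureTheory Filter
open scoped RealInnerProductSpace

noncomputable section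

variable {n : ℕ}

open scoped ContDiff
open scoped Interval

variable {n : ℕ}
local notation "E'" => EuclideanSpace ℝ (Fin n)
theorem one_le_winf : (1 : WithTop ℕ∞) ≤ ∞ := by
  have : ((1:ℕ∞) : WithTop ℕ∞) ≤ ((⊤:ℕ∞) : WithTop ℕ∞) := WithTop.coe_le_coe.mpr le_top
  simpa using this

theorem two_le_winf : (2 : WithTop ℕ∞) ≤ ∞ := by
  have : ((2:ℕ∞) : WithTop ℕ∞) ≤ ((⊤:ℕ∞) : WithTop ℕ∞) := WithTop.coe_le_coe.mpr le_top
  simpa using this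

theorem winf_add_one_le : ∞ + 1 ≤ (∞ : WithTop ℕ∞) := by
  have : ((⊤+1:ℕ∞) : WithTop ℕ∞) ≤ ((⊤:ℕ∞) : WithTop ℕ∞) := WithTop.coe_le_coe.mpr (by simp)
  simpa using this

/-- x-partial derivative of a two-variable map. -/
def pdx {n : ℕ} (F : ℝ × ℝ → EuclideanSpace ℝ (Fin n)) : ℝ × ℝ → EuclideanSpace ℝ (Fin n) :=
  fun p => fderiv ℝ F p (0, 1)

/-- t-partial derivative of a two-variable map. -/
def pdt {n : ℕ} (F : ℝ × ℝ → EuclideanSpace ℝ (Fin n)) : ℝ × ℝ → EuclideanSpace ℝ (Fin n) :=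
  fun p => fderiv ℝ F p (1, 0)

theorem hasDerivAt_pdx {F : ℝ × ℝ → E'} (hF : ContDiff ℝ (⊤ : ℕ∞) F) (s x : ℝ) :
    HasDerivAt (fun y => F (s, y)) (pdx F (s, x)) x := by
  have h1 : HasDerivAt (fun y : ℝ => ((s, y) : ℝ × ℝ)) ((0 : ℝ), (1 : ℝ)) x :=
    (hasDerivAt_const x s).prodMk (hasDerivAt_id x)
  have h2 := (hF.differentiable (by simp) (s, x)).hasFDerivAt
  exact HasFDerivAt.comp_hasDerivAt (f := fun y : ℝ => ((s, y) : ℝ × ℝ)) (x := x) h2 h1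

theorem hasDerivAt_pdt {F : ℝ × ℝ → E'} (hF : ContDiff ℝ (⊤ : ℕ∞) F) (s x : ℝ) :
    HasDerivAt (fun u => F (u, x)) (pdt F (s, x)) s := by
  have h1 : HasDerivAt (fun u : ℝ => ((u, x) : ℝ × ℝ)) ((1 : ℝ), (0 : ℝ)) s :=
    (hasDerivAt_id s).prodMk (hasDerivAt_const s x)
  have h2 := (hF.differentiable (by simp) (s, x)).hasFDerivAt
  exact HasFDerivAt.comp_hasDerivAt (f := fun u : ℝ => ((u, x) : ℝ × ℝ)) (x := s) h2 h1

theorem contDiff_pdx {F : ℝ × ℝ → E'} (hF : ContDiff ℝ (⊤ : ℕ∞) F) :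
    ContDiff ℝ (⊤ : ℕ∞) (pdx F) :=
  (ContinuousLinearMap.apply ℝ E' ((0:ℝ), (1:ℝ))).contDiff.comp
    (hF.fderiv_right winf_add_one_le)

theorem contDiff_pdt {F : ℝ × ℝ → E'} (hF : ContDiff ℝ (⊤ : ℕ∞) F) :
    ContDiff ℝ (⊤ : ℕ∞) (pdt F) :=
  (ContinuousLinearMap.apply ℝ E' ((1:ℝ), (0:ℝ))).contDiff.comp
    (hF.fderiv_right winf_add_one_le)

theorem pdt_pdx {F : ℝ × ℝ → E'} (hF : ContDiff ℝ (⊤ : ℕ∞) F) :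
    pdt (pdx F) = pdx (pdt F) := by
  funext p
  have hd : ∀ v : ℝ × ℝ, HasFDerivAt (fun q => fderiv ℝ F q v)
      ((ContinuousLinearMap.apply ℝ E' v).comp (fderiv ℝ (fderiv ℝ F) p)) p := by
    intro v
    exact (ContinuousLinearMap.apply ℝ E' v).hasFDerivAt.comp p
      ((hF.fderiv_right winf_add_one_le).differentiable (by simp) p).hasFDerivAt
  have e1 : fderiv ℝ (pdx F) p
      = (ContinuousLinearMap.apply ℝ E' ((0:ℝ),(1:ℝ))).comp (fderiv ℝ (fderiv ℝ F) p) :=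
    (hd (0,1)).fderiv
  have e2 : fderiv ℝ (pdt F) p
      = (ContinuousLinearMap.apply ℝ E' ((1:ℝ),(0:ℝ))).comp (fderiv ℝ (fderiv ℝ F) p) :=
    (hd (1,0)).fderiv
  show fderiv ℝ (pdx F) p (1, 0) = fderiv ℝ (pdt F) p (0, 1)
  rw [e1, e2]
  exact (hF.contDiffAt.isSymmSndFDerivAt (by simp [minSmoothness_of_isRCLikeNormedField]; exact two_le_winf)).eq _ _

theorem HasDerivAt.norm'_s1 {n : ℕ} {f : ℝ → EuclideanSpace ℝ (Fin n)} {f' : EuclideanSpace ℝ (Fin n)}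
    {x : ℝ} (hf : HasDerivAt f f' x) (h0 : f x ≠ 0) :
    HasDerivAt (fun y => ‖f y‖) (⟪f x, f'⟫ / ‖f x‖) x := by
  have hn : ‖f x‖ ≠ 0 := norm_ne_zero_iff.mpr h0
  have h1 : HasDerivAt (fun y => ⟪f y, f y⟫) (⟪f x, f'⟫ + ⟪f', f x⟫) x := hf.inner ℝ hf
  have hne : ⟪f x, f x⟫ ≠ (0:ℝ) := by
    rw [real_inner_self_eq_norm_sq]
    exact pow_ne_zero 2 hn
  have h2 := h1.sqrt hne
  have e : (fun y => Real.sqrt ⟪f y, f y⟫) = fun y => ‖f y‖ := by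
    funext y
    rw [real_inner_self_eq_norm_sq, Real.sqrt_sq (norm_nonneg _)]
  rw [e] at h2
  convert h2 using 1
  rw [real_inner_comm f' (f x), real_inner_self_eq_norm_sq, Real.sqrt_sq (norm_nonneg _)]
  have h2w : 2 * ‖f x‖ ≠ 0 := by
    simp [hn]
  rw [div_eq_div_iff hn h2w]
  ring
def vU {n : ℕ} (a : EuclideanSpace ℝ (Fin n)) : ℝ := ‖a‖⁻¹

def vU1 {n : ℕ} (a da : EuclideanSpace ℝ (Fin n)) : ℝ :=
  (-(⟪a, da⟫ * ((vU a) * ((vU a) * (vU a)))))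

def vW1 {n : ℕ} (a da : EuclideanSpace ℝ (Fin n)) : ℝ :=
  (⟪a, da⟫ * (vU a))


theorem hasDerivAt_vU {n : ℕ} {fa : ℝ → EuclideanSpace ℝ (Fin n)} {va : EuclideanSpace ℝ (Fin n)}
    {y : ℝ} (h0 : fa y ≠ 0) (ha : HasDerivAt fa (va) y) :
    HasDerivAt (fun z => vU (fa z)) (vU1 (fa y) va) y := by
  have hn : ‖fa y‖ ≠ 0 := norm_ne_zero_iff.mpr h0
  have h2 : HasDerivAt (fun z => vU (fa z)) _ y := (ha.norm'_s1 h0).inv hn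
  convert h2 using 1
  show -(⟪fa y, va⟫ * (‖fa y‖⁻¹ * (‖fa y‖⁻¹ * ‖fa y‖⁻¹))) = _
  simp only [vU1, vU, div_eq_mul_inv, mul_inv, pow_two, neg_mul]
  ring

theorem hasDerivAt_vW {n : ℕ} {fa : ℝ → EuclideanSpace ℝ (Fin n)} {va : EuclideanSpace ℝ (Fin n)}
    {y : ℝ} (h0 : fa y ≠ 0) (ha : HasDerivAt fa (va) y) :
    HasDerivAt (fun z => ‖fa z‖) (vW1 (fa y) va) y := by
  have h2 := ha.norm'_s1 h0
  rw [div_eq_mul_inv] at h2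
  exact h2

def vU1g {n : ℕ} (a da e1a e1da : EuclideanSpace ℝ (Fin n)) : ℝ :=
  (-(((⟪a, e1da⟫ + ⟪e1a, da⟫) * ((vU a) * ((vU a) * (vU a)))) + (⟪a, da⟫ * (((vU1 a e1a) * ((vU a) * (vU a))) + ((vU a) * (((vU1 a e1a) * (vU a)) + ((vU a) * (vU1 a e1a))))))))

def vU1gg {n : ℕ} (a da e1a e1da e2a e2da e2e1a e2e1da : EuclideanSpace ℝ (Fin n)) : ℝ :=
  (-(((((⟪a, e2e1da⟫ + ⟪e2a, e1da⟫) + (⟪e1a, e2da⟫ + ⟪e2e1a, da⟫)) * ((vU a) * ((vU a) * (vU a)))) + ((⟪a, e1da⟫ + ⟪e1a, da⟫) * (((vU1 a e2a) * ((vU a) * (vU a))) + ((vU a) * (((vU1 a e2a) * (vU a)) + ((vU a) * (vU1 a e2a))))))) + (((⟪a, e2da⟫ + ⟪e2a, da⟫) * (((vU1 a e1a) * ((vU a) * (vU a))) + ((vU a) * (((vU1 a e1a) * (vU a)) + ((vU a) * (vU1 a e1a)))))) + (⟪a, da⟫ * ((((vU1g a e1a e2a e2e1a) * ((vU a) * (vU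 a))) + ((vU1 a e1a) * (((vU1 a e2a) * (vU a)) + ((vU a) * (vU1 a e2a))))) + (((vU1 a e2a) * (((vU1 a e1a) * (vU a)) + ((vU a) * (vU1 a e1a)))) + ((vU a) * ((((vU1g a e1a e2a e2e1a) * (vU a)) + ((vU1 a e1a) * (vU1 a e2a))) + (((vU1 a e2a) * (vU1 a e1a)) + ((vU a) * (vU1g a e1a e2a e2e1a)))))))))))

def vT {n : ℕ} (a : EuclideanSpace ℝ (Fin n)) : EuclideanSpace ℝ (Fin n) :=
  ((vU a) • a)

def vTg {n : ℕ} (a e4a : EuclideanSpace ℝ (Fin n)) : EuclideanSpace ℝ (Fin n) :=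
  (((vU a) • e4a) + ((vU1 a e4a) • a))

def vTgg {n : ℕ} (a e4a e5a e5e4a : EuclideanSpace ℝ (Fin n)) : EuclideanSpace ℝ (Fin n) :=
  ((((vU a) • e5e4a) + ((vU1 a e5a) • e4a)) + (((vU1 a e4a) • e5a) + ((vU1g a e4a e5a e5e4a) • a)))

def vTggg {n : ℕ} (a e4a e5a e5e4a e6a e6e4a e6e5a e6e5e4a : EuclideanSpace ℝ (Fin n)) : EuclideanSpace ℝ (Fin n) :=
  (((((vU a) • e6e5e4a) + ((vU1 a e6a) • e5e4a)) + (((vU1 a e5a) • e6e4a) + ((vU1g a e5a e6a e6e5a) • e4a))) + ((((vU1 a e4a) • e6e5a) + ((vU1g a e4a e6a e6e4a) • e5a)) + (((vU1g a e4a e5a e5e4a) • e6a) + ((vU1gg a e4a e5a e5e4a e6a e6e4a e6e5a e6e5e4a) • a))))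

def vK {n : ℕ} (a b : EuclideanSpace ℝ (Fin n)) : EuclideanSpace ℝ (Fin n) :=
  ((vU a) • (vTg a b))

def vKg {n : ℕ} (a b e7a e7b : EuclideanSpace ℝ (Fin n)) : EuclideanSpace ℝ (Fin n) :=
  (((vU a) • (vTgg a b e7a e7b)) + ((vU1 a e7a) • (vTg a b)))

def vKgg {n : ℕ} (a b e7a e7b e8a e8b e8e7a e8e7b : EuclideanSpace ℝ (Fin n)) : EuclideanSpace ℝ (Fin n) :=
  ((((vU a) • (vTggg a b e7a e7b e8a e8b e8e7a e8e7b)) + ((vU1 a e8a) • (vTgg a b e7a e7b))) + (((vU1 a e7a) • (vTgg a b e8a e8b)) + ((vU1g a e7a e8a e8e7a) • (vTg a b))))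

def vSK {n : ℕ} (a b c : EuclideanSpace ℝ (Fin n)) : EuclideanSpace ℝ (Fin n) :=
  (((vU a) • (vKg a b b c)) - (⟪((vU a) • (vKg a b b c)), (vT a)⟫ • (vT a)))

def vSKg {n : ℕ} (a b c e9a e9b e9c : EuclideanSpace ℝ (Fin n)) : EuclideanSpace ℝ (Fin n) :=
  ((((vU a) • (vKgg a b b c e9a e9b e9b e9c)) + ((vU1 a e9a) • (vKg a b b c))) - ((⟪((vU a) • (vKg a b b c)), (vT a)⟫ • (vTg a e9a)) + ((⟪((vU a) • (vKg a b b c)), (vTg a e9a)⟫ + ⟪(((vU a) • (vKgg a b b c e9a e9b e9b e9c)) + ((vU1 a e9a) • (vKg a b b c))), (vT a)⟫) • (vT a))))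

def vSSK {n : ℕ} (a b c d : EuclideanSpace ℝ (Fin n)) : EuclideanSpace ℝ (Fin n) :=
  (((vU a) • (vSKg a b c b c d)) - (⟪((vU a) • (vSKg a b c b c d)), (vT a)⟫ • (vT a)))

def vV {n : ℕ} (a p : EuclideanSpace ℝ (Fin n)) : EuclideanSpace ℝ (Fin n) :=
  (p - (⟪p, (vT a)⟫ • (vT a)))

def vVg {n : ℕ} (a p e10a e10p : EuclideanSpace ℝ (Fin n)) : EuclideanSpace ℝ (Fin n) :=
  (e10p - ((⟪p, (vT a)⟫ • (vTg a e10a)) + ((⟪p, (vTg a e10a)⟫ + ⟪e10p, (vT a)⟫) • (vT a))))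

def vVgg {n : ℕ} (a p e10a e10p e11a e11p e11e10a e11e10p : EuclideanSpace ℝ (Fin n)) : EuclideanSpace ℝ (Fin n) :=
  (e11e10p - (((⟪p, (vT a)⟫ • (vTgg a e10a e11a e11e10a)) + ((⟪p, (vTg a e11a)⟫ + ⟪e11p, (vT a)⟫) • (vTg a e10a))) + (((⟪p, (vTg a e10a)⟫ + ⟪e10p, (vT a)⟫) • (vTg a e11a)) + (((⟪p, (vTgg a e10a e11a e11e10a)⟫ + ⟪e11p, (vTg a e10a)⟫) + (⟪e10p, (vTg a e11a)⟫ + ⟪e11e10p, (vT a)⟫)) • (vT a)))))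

def vSV {n : ℕ} (a b p q : EuclideanSpace ℝ (Fin n)) : EuclideanSpace ℝ (Fin n) :=
  (((vU a) • (vVg a p b q)) - (⟪((vU a) • (vVg a p b q)), (vT a)⟫ • (vT a)))

def vSVg {n : ℕ} (a b p q e12a e12b e12p e12q : EuclideanSpace ℝ (Fin n)) : EuclideanSpace ℝ (Fin n) :=
  ((((vU a) • (vVgg a p b q e12a e12p e12b e12q)) + ((vU1 a e12a) • (vVg a p b q))) - ((⟪((vU a) • (vVg a p b q)), (vT a)⟫ • (vTg a e12a)) + ((⟪((vU a) • (vVg a p b q)), (vTg a e12a)⟫ + ⟪(((vU a) • (vVgg a p b q e12a e12p e12b e12q)) + ((vU1 a e12a) • (vVg a p b q))), (vT a)⟫) • (vT a))))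

def vPhi {n : ℕ} (a p : EuclideanSpace ℝ (Fin n)) : ℝ :=
  ⟪p, (vT a)⟫

def vPhig {n : ℕ} (a p e13a e13p : EuclideanSpace ℝ (Fin n)) : ℝ :=
  (⟪p, (vTg a e13a)⟫ + ⟪e13p, (vT a)⟫)

def vFJ {n : ℕ} (a b c p q : EuclideanSpace ℝ (Fin n)) : ℝ :=
  ((((2:ℝ) * ⟪(vK a b), (vSV a b p q)⟫) - ((2:ℝ) * ⟪(vSK a b c), (vV a p)⟫)) + ((vPhi a p) * ⟪(vK a b), (vK a b)⟫))

def vFJg {n : ℕ} (a b c p q e14a e14b e14c e14p e14q : EuclideanSpace ℝ (Fin n)) : ℝ :=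
  ((((2:ℝ) * (⟪(vK a b), (vSVg a b p q e14a e14b e14p e14q)⟫ + ⟪(vKg a b e14a e14b), (vSV a b p q)⟫)) - ((2:ℝ) * (⟪(vSK a b c), (vVg a p e14a e14p)⟫ + ⟪(vSKg a b c e14a e14b e14c), (vV a p)⟫))) + (((vPhig a p e14a e14p) * ⟪(vK a b), (vK a b)⟫) + ((vPhi a p) * (⟪(vK a b), (vKg a b e14a e14b)⟫ + ⟪(vKg a b e14a e14b), (vK a b)⟫))))

def vGJ {n : ℕ} (a b c d p : EuclideanSpace ℝ (Fin n)) : ℝ :=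
  (⟪(((2:ℝ) • (vSSK a b c d)) + (⟪(vK a b), (vK a b)⟫ • (vK a b))), (vV a p)⟫ * ‖a‖)

def vEJ {n : ℕ} (a b : EuclideanSpace ℝ (Fin n)) : ℝ :=
  (⟪(vK a b), (vK a b)⟫ * ‖a‖)

def vEJg {n : ℕ} (a b e15a e15b : EuclideanSpace ℝ (Fin n)) : ℝ :=
  (((⟪(vK a b), (vKg a b e15a e15b)⟫ + ⟪(vKg a b e15a e15b), (vK a b)⟫) * ‖a‖) + (⟪(vK a b), (vK a b)⟫ * (vW1 a e15a)))

theorem hasDerivAt_vU1 {n : ℕ} {fa fda : ℝ → EuclideanSpace ℝ (Fin n)} {va vda : EuclideanSpace ℝ (Fin n)} {y : ℝ}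
    (h0 : fa y ≠ 0) (ha : HasDerivAt fa (va) y) (hda : HasDerivAt fda (vda) y) :
    HasDerivAt (fun z => vU1 (fa z) (fda z)) (vU1g (fa y) (fda y) va vda) y := by
  exact ((((((ha).inner ℝ (hda))).mul ((((hasDerivAt_vU h0 (ha))).mul ((((hasDerivAt_vU h0 (ha))).mul ((hasDerivAt_vU h0 (ha))))))))).neg)

theorem hasDerivAt_vU1g {n : ℕ} {fa fda fe1a fe1da : ℝ → EuclideanSpace ℝ (Fin n)} {va vda ve1a ve1da : EuclideanSpace ℝ (Fin n)} {y : ℝ}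
    (h0 : fa y ≠ 0) (ha : HasDerivAt fa (va) y) (hda : HasDerivAt fda (vda) y) (he1a : HasDerivAt fe1a (ve1a) y) (he1da : HasDerivAt fe1da (ve1da) y) :
    HasDerivAt (fun z => vU1g (fa z) (fda z) (fe1a z) (fe1da z)) (vU1gg (fa y) (fda y) (fe1a y) (fe1da y) va vda ve1a ve1da) y := by
  exact ((((((((((ha).inner ℝ (he1da))).add (((he1a).inner ℝ (hda))))).mul ((((hasDerivAt_vU h0 (ha))).mul ((((hasDerivAt_vU h0 (ha))).mul ((hasDerivAt_vU h0 (ha))))))))).add (((((ha).inner ℝ (hda))).mul ((((((hasDerivAt_vU1 h0 (ha) (he1a))).mul ((((hasDerivAt_vU h0 (ha))).mul ((hasDerivAt_vU h0 (ha))))))).add ((((hasDerivAt_vU h0 (ha))).mul ((((((hasDerivAt_vU1 h0 (ha) (he1a))).mul ((hasDerivAt_vU h0 (ha))))).add ((((hasDerivAt_vU h0 (ha))).mul ((hasDerivAt_vU1 h0 (ha) (he1a))))))))))))))).neg)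

theorem hasDerivAt_vT {n : ℕ} {fa : ℝ → EuclideanSpace ℝ (Fin n)} {va : EuclideanSpace ℝ (Fin n)} {y : ℝ}
    (h0 : fa y ≠ 0) (ha : HasDerivAt fa (va) y) :
    HasDerivAt (fun z => vT (fa z)) (vTg (fa y) va) y := by
  exact (((hasDerivAt_vU h0 (ha))).smul (ha))

theorem hasDerivAt_vTg {n : ℕ} {fa fe4a : ℝ → EuclideanSpace ℝ (Fin n)} {va ve4a : EuclideanSpace ℝ (Fin n)} {y : ℝ}
    (h0 : fa y ≠ 0) (ha : HasDerivAt fa (va) y) (he4a : HasDerivAt fe4a (ve4a) y) :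
    HasDerivAt (fun z => vTg (fa z) (fe4a z)) (vTgg (fa y) (fe4a y) va ve4a) y := by
  exact (((((hasDerivAt_vU h0 (ha))).smul (he4a))).add ((((hasDerivAt_vU1 h0 (ha) (he4a))).smul (ha))))

theorem hasDerivAt_vTgg {n : ℕ} {fa fe4a fe5a fe5e4a : ℝ → EuclideanSpace ℝ (Fin n)} {va ve4a ve5a ve5e4a : EuclideanSpace ℝ (Fin n)} {y : ℝ}
    (h0 : fa y ≠ 0) (ha : HasDerivAt fa (va) y) (he4a : HasDerivAt fe4a (ve4a) y) (he5a : HasDerivAt fe5a (ve5a) y) (he5e4a : HasDerivAt fe5e4a (ve5e4a) y) :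
    HasDerivAt (fun z => vTgg (fa z) (fe4a z) (fe5a z) (fe5e4a z)) (vTggg (fa y) (fe4a y) (fe5a y) (fe5e4a y) va ve4a ve5a ve5e4a) y := by
  exact (((((((hasDerivAt_vU h0 (ha))).smul (he5e4a))).add ((((hasDerivAt_vU1 h0 (ha) (he5a))).smul (he4a))))).add ((((((hasDerivAt_vU1 h0 (ha) (he4a))).smul (he5a))).add ((((hasDerivAt_vU1g h0 (ha) (he4a) (he5a) (he5e4a))).smul (ha))))))

theorem hasDerivAt_vK {n : ℕ} {fa fb : ℝ → EuclideanSpace ℝ (Fin n)} {va vb : EuclideanSpace ℝ (Fin n)} {y : ℝ}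
    (h0 : fa y ≠ 0) (ha : HasDerivAt fa (va) y) (hb : HasDerivAt fb (vb) y) :
    HasDerivAt (fun z => vK (fa z) (fb z)) (vKg (fa y) (fb y) va vb) y := by
  exact (((hasDerivAt_vU h0 (ha))).smul ((hasDerivAt_vTg h0 (ha) (hb))))

theorem hasDerivAt_vKg {n : ℕ} {fa fb fe7a fe7b : ℝ → EuclideanSpace ℝ (Fin n)} {va vb ve7a ve7b : EuclideanSpace ℝ (Fin n)} {y : ℝ}
    (h0 : fa y ≠ 0) (ha : HasDerivAt fa (va) y) (hb : HasDerivAt fb (vb) y) (he7a : HasDerivAt fe7a (ve7a) y) (he7b : HasDerivAt fe7b (ve7b) y) :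
    HasDerivAt (fun z => vKg (fa z) (fb z) (fe7a z) (fe7b z)) (vKgg (fa y) (fb y) (fe7a y) (fe7b y) va vb ve7a ve7b) y := by
  exact (((((hasDerivAt_vU h0 (ha))).smul ((hasDerivAt_vTgg h0 (ha) (hb) (he7a) (he7b))))).add ((((hasDerivAt_vU1 h0 (ha) (he7a))).smul ((hasDerivAt_vTg h0 (ha) (hb))))))

theorem hasDerivAt_vSK {n : ℕ} {fa fb fc : ℝ → EuclideanSpace ℝ (Fin n)} {va vb vc : EuclideanSpace ℝ (Fin n)} {y : ℝ}
    (h0 : fa y ≠ 0) (ha : HasDerivAt fa (va) y) (hb : HasDerivAt fb (vb) y) (hc : HasDerivAt fc (vc) y) :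
    HasDerivAt (fun z => vSK (fa z) (fb z) (fc z)) (vSKg (fa y) (fb y) (fc y) va vb vc) y := by
  exact (((((hasDerivAt_vU h0 (ha))).smul ((hasDerivAt_vKg h0 (ha) (hb) (hb) (hc))))).sub ((((((((hasDerivAt_vU h0 (ha))).smul ((hasDerivAt_vKg h0 (ha) (hb) (hb) (hc))))).inner ℝ ((hasDerivAt_vT h0 (ha))))).smul ((hasDerivAt_vT h0 (ha))))))

theorem hasDerivAt_vV {n : ℕ} {fa fp : ℝ → EuclideanSpace ℝ (Fin n)} {va vp : EuclideanSpace ℝ (Fin n)} {y : ℝ}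
    (h0 : fa y ≠ 0) (ha : HasDerivAt fa (va) y) (hp : HasDerivAt fp (vp) y) :
    HasDerivAt (fun z => vV (fa z) (fp z)) (vVg (fa y) (fp y) va vp) y := by
  exact ((hp).sub (((((hp).inner ℝ ((hasDerivAt_vT h0 (ha))))).smul ((hasDerivAt_vT h0 (ha))))))

theorem hasDerivAt_vVg {n : ℕ} {fa fp fe10a fe10p : ℝ → EuclideanSpace ℝ (Fin n)} {va vp ve10a ve10p : EuclideanSpace ℝ (Fin n)} {y : ℝ}
    (h0 : fa y ≠ 0) (ha : HasDerivAt fa (va) y) (hp : HasDerivAt fp (vp) y) (he10a : HasDerivAt fe10a (ve10a) y) (he10p : HasDerivAt fe10p (ve10p) y) :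
    HasDerivAt (fun z => vVg (fa z) (fp z) (fe10a z) (fe10p z)) (vVgg (fa y) (fp y) (fe10a y) (fe10p y) va vp ve10a ve10p) y := by
  exact ((he10p).sub (((((((hp).inner ℝ ((hasDerivAt_vT h0 (ha))))).smul ((hasDerivAt_vTg h0 (ha) (he10a))))).add (((((((hp).inner ℝ ((hasDerivAt_vTg h0 (ha) (he10a))))).add (((he10p).inner ℝ ((hasDerivAt_vT h0 (ha))))))).smul ((hasDerivAt_vT h0 (ha))))))))

theorem hasDerivAt_vSV {n : ℕ} {fa fb fp fq : ℝ → EuclideanSpace ℝ (Fin n)} {va vb vp vq : EuclideanSpace ℝ (Fin n)} {y : ℝ}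
    (h0 : fa y ≠ 0) (ha : HasDerivAt fa (va) y) (hb : HasDerivAt fb (vb) y) (hp : HasDerivAt fp (vp) y) (hq : HasDerivAt fq (vq) y) :
    HasDerivAt (fun z => vSV (fa z) (fb z) (fp z) (fq z)) (vSVg (fa y) (fb y) (fp y) (fq y) va vb vp vq) y := by
  exact (((((hasDerivAt_vU h0 (ha))).smul ((hasDerivAt_vVg h0 (ha) (hp) (hb) (hq))))).sub ((((((((hasDerivAt_vU h0 (ha))).smul ((hasDerivAt_vVg h0 (ha) (hp) (hb) (hq))))).inner ℝ ((hasDerivAt_vT h0 (ha))))).smul ((hasDerivAt_vT h0 (ha))))))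

theorem hasDerivAt_vPhi {n : ℕ} {fa fp : ℝ → EuclideanSpace ℝ (Fin n)} {va vp : EuclideanSpace ℝ (Fin n)} {y : ℝ}
    (h0 : fa y ≠ 0) (ha : HasDerivAt fa (va) y) (hp : HasDerivAt fp (vp) y) :
    HasDerivAt (fun z => vPhi (fa z) (fp z)) (vPhig (fa y) (fp y) va vp) y := by
  exact ((hp).inner ℝ ((hasDerivAt_vT h0 (ha))))

theorem hasDerivAt_vFJ {n : ℕ} {fa fb fc fp fq : ℝ → EuclideanSpace ℝ (Fin n)} {va vb vc vp vq : EuclideanSpace ℝ (Fin n)} {y : ℝ}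
    (h0 : fa y ≠ 0) (ha : HasDerivAt fa (va) y) (hb : HasDerivAt fb (vb) y) (hc : HasDerivAt fc (vc) y) (hp : HasDerivAt fp (vp) y) (hq : HasDerivAt fq (vq) y) :
    HasDerivAt (fun z => vFJ (fa z) (fb z) (fc z) (fp z) (fq z)) (vFJg (fa y) (fb y) (fc y) (fp y) (fq y) va vb vc vp vq) y := by
  exact (((((((((hasDerivAt_vK h0 (ha) (hb))).inner ℝ ((hasDerivAt_vSV h0 (ha) (hb) (hp) (hq))))).const_mul ((2:ℝ)))).sub ((((((hasDerivAt_vSK h0 (ha) (hb) (hc))).inner ℝ ((hasDerivAt_vV h0 (ha) (hp))))).const_mul ((2:ℝ)))))).add ((((hasDerivAt_vPhi h0 (ha) (hp))).mul ((((hasDerivAt_vK h0 (ha) (hb))).inner ℝ ((hasDerivAt_vK h0 (ha) (hb))))))))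

theorem hasDerivAt_vEJ {n : ℕ} {fa fb : ℝ → EuclideanSpace ℝ (Fin n)} {va vb : EuclideanSpace ℝ (Fin n)} {y : ℝ}
    (h0 : fa y ≠ 0) (ha : HasDerivAt fa (va) y) (hb : HasDerivAt fb (vb) y) :
    HasDerivAt (fun z => vEJ (fa z) (fb z)) (vEJg (fa y) (fb y) va vb) y := by
  exact (((((hasDerivAt_vK h0 (ha) (hb))).inner ℝ ((hasDerivAt_vK h0 (ha) (hb))))).mul ((hasDerivAt_vW h0 (ha))))

theorem contOn_vU {n : ℕ} {β : Type} [TopologicalSpace β] {S : Set β}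
    {fa : β → EuclideanSpace ℝ (Fin n)} (h0 : ∀ z ∈ S, fa z ≠ 0) (ha : ContinuousOn fa S) :
    ContinuousOn (fun z => vU (fa z)) S :=
  (ha.norm).inv₀ (fun z hz => norm_ne_zero_iff.mpr (h0 z hz))

theorem contOn_vU1 {n : ℕ} {β : Type} [TopologicalSpace β] {S : Set β}
    {fa fda : β → EuclideanSpace ℝ (Fin n)} (h0 : ∀ z ∈ S, fa z ≠ 0) (ha : ContinuousOn fa S) (hda : ContinuousOn fda S) :
    ContinuousOn (fun z => vU1 (fa z) (fda z)) S := by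
  exact ((((((ha).inner (𝕜 := ℝ) (hda))).mul ((((contOn_vU h0 (ha))).mul ((((contOn_vU h0 (ha))).mul ((contOn_vU h0 (ha))))))))).neg)

theorem contOn_vW1 {n : ℕ} {β : Type} [TopologicalSpace β] {S : Set β}
    {fa fda : β → EuclideanSpace ℝ (Fin n)} (h0 : ∀ z ∈ S, fa z ≠ 0) (ha : ContinuousOn fa S) (hda : ContinuousOn fda S) :
    ContinuousOn (fun z => vW1 (fa z) (fda z)) S := by
  exact ((((ha).inner (𝕜 := ℝ) (hda))).mul ((contOn_vU h0 (ha))))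

theorem contOn_vU1g {n : ℕ} {β : Type} [TopologicalSpace β] {S : Set β}
    {fa fda fe1a fe1da : β → EuclideanSpace ℝ (Fin n)} (h0 : ∀ z ∈ S, fa z ≠ 0) (ha : ContinuousOn fa S) (hda : ContinuousOn fda S) (he1a : ContinuousOn fe1a S) (he1da : ContinuousOn fe1da S) :
    ContinuousOn (fun z => vU1g (fa z) (fda z) (fe1a z) (fe1da z)) S := by
  exact ((((((((((ha).inner (𝕜 := ℝ) (he1da))).add (((he1a).inner (𝕜 := ℝ) (hda))))).mul ((((contOn_vU h0 (ha))).mul ((((contOn_vU h0 (ha))).mul ((contOn_vU h0 (ha))))))))).add (((((ha).inner (𝕜 := ℝ) (hda))).mul ((((((contOn_vU1 h0 (ha) (he1a))).mul ((((contOn_vU h0 (ha))).mul ((contOn_vU h0 (ha))))))).add ((((contOn_vU h0 (ha))).mul ((((((contOn_vU1 h0 (ha) (he1a))).mul ((contOn_vU h0 (ha))))).add ((((contOn_vU h0 (ha))).mul ((contOn_vU1 h0 (ha) (he1a))))))))))))))).neg)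

theorem contOn_vU1gg {n : ℕ} {β : Type} [TopologicalSpace β] {S : Set β}
    {fa fda fe1a fe1da fe2a fe2da fe2e1a fe2e1da : β → EuclideanSpace ℝ (Fin n)} (h0 : ∀ z ∈ S, fa z ≠ 0) (ha : ContinuousOn fa S) (hda : ContinuousOn fda S) (he1a : ContinuousOn fe1a S) (he1da : ContinuousOn fe1da S) (he2a : ContinuousOn fe2a S) (he2da : ContinuousOn fe2da S) (he2e1a : ContinuousOn fe2e1a S) (he2e1da : ContinuousOn fe2e1da S) :
    ContinuousOn (fun z => vU1gg (fa z) (fda z) (fe1a z) (fe1da z) (fe2a z) (fe2da z) (fe2e1a z) (fe2e1da z)) S := by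
  exact ((((((((((((((ha).inner (𝕜 := ℝ) (he2e1da))).add (((he2a).inner (𝕜 := ℝ) (he1da))))).add (((((he1a).inner (𝕜 := ℝ) (he2da))).add (((he2e1a).inner (𝕜 := ℝ) (hda))))))).mul ((((contOn_vU h0 (ha))).mul ((((contOn_vU h0 (ha))).mul ((contOn_vU h0 (ha))))))))).add (((((((ha).inner (𝕜 := ℝ) (he1da))).add (((he1a).inner (𝕜 := ℝ) (hda))))).mul ((((((contOn_vU1 h0 (ha) (he2a))).mul ((((contOn_vU h0 (ha))).mul ((contOn_vU h0 (ha))))))).add ((((contOn_vU h0 (ha))).mul ((((((contOn_vU1 h0 (ha) (he2a))).mul ((contOn_vU h0 (ha))))).add ((((contOn_vU h0 (ha))).mul ((contOn_vU1 h0 (ha) (he2a))))))))))))))).add (((((((((ha).inner (𝕜 := ℝ) (he2da))).add (((he2a).inner (𝕜 := ℝ) (hda))))).mul ((((((contOn_vU1 h0 (ha) (he1a))).mul ((((contOn_vU h0 (ha))).mul ((contOn_vU h0 (ha))))))).add ((((contOn_vU h0 (ha))).mul ((((((contOn_vU1 h0 (ha) (he1a))).mul ((contOn_vU h0 (ha))))).add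 ((((contOn_vU h0 (ha))).mul ((contOn_vU1 h0 (ha) (he1a))))))))))))).add (((((ha).inner (𝕜 := ℝ) (hda))).mul ((((((((contOn_vU1g h0 (ha) (he1a) (he2a) (he2e1a))).mul ((((contOn_vU h0 (ha))).mul ((contOn_vU h0 (ha))))))).add ((((contOn_vU1 h0 (ha) (he1a))).mul ((((((contOn_vU1 h0 (ha) (he2a))).mul ((contOn_vU h0 (ha))))).add ((((contOn_vU h0 (ha))).mul ((contOn_vU1 h0 (ha) (he2a))))))))))).add ((((((contOn_vU1 h0 (ha) (he2a))).mul ((((((contOn_vU1 h0 (ha) (he1a))).mul ((contOn_vU h0 (ha))))).add ((((contOn_vU h0 (ha))).mul ((contOn_vU1 h0 (ha) (he1a))))))))).add ((((contOn_vU h0 (ha))).mul ((((((((contOn_vU1g h0 (ha) (he1a) (he2a) (he2e1a))).mul ((contOn_vU h0 (ha))))).add ((((contOn_vU1 h0 (ha) (he1a))).mul ((contOn_vU1 h0 (ha) (he2a))))))).add ((((((contOn_vU1 h0 (ha) (he2a))).mul ((contOn_vU1 h0 (ha) (he1a))))).add ((((contOn_vU h0 (ha))).mul ((contOn_vU1g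 h0 (ha) (he1a) (he2a) (he2e1a))))))))))))))))))))).neg)

theorem contOn_vT {n : ℕ} {β : Type} [TopologicalSpace β] {S : Set β}
    {fa : β → EuclideanSpace ℝ (Fin n)} (h0 : ∀ z ∈ S, fa z ≠ 0) (ha : ContinuousOn fa S) :
    ContinuousOn (fun z => vT (fa z)) S := by
  exact (((contOn_vU h0 (ha))).smul (ha))

theorem contOn_vTg {n : ℕ} {β : Type} [TopologicalSpace β] {S : Set β}
    {fa fe4a : β → EuclideanSpace ℝ (Fin n)} (h0 : ∀ z ∈ S, fa z ≠ 0) (ha : ContinuousOn fa S) (he4a : ContinuousOn fe4a S) :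
    ContinuousOn (fun z => vTg (fa z) (fe4a z)) S := by
  exact (((((contOn_vU h0 (ha))).smul (he4a))).add ((((contOn_vU1 h0 (ha) (he4a))).smul (ha))))

theorem contOn_vTgg {n : ℕ} {β : Type} [TopologicalSpace β] {S : Set β}
    {fa fe4a fe5a fe5e4a : β → EuclideanSpace ℝ (Fin n)} (h0 : ∀ z ∈ S, fa z ≠ 0) (ha : ContinuousOn fa S) (he4a : ContinuousOn fe4a S) (he5a : ContinuousOn fe5a S) (he5e4a : ContinuousOn fe5e4a S) :
    ContinuousOn (fun z => vTgg (fa z) (fe4a z) (fe5a z) (fe5e4a z)) S := by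
  exact (((((((contOn_vU h0 (ha))).smul (he5e4a))).add ((((contOn_vU1 h0 (ha) (he5a))).smul (he4a))))).add ((((((contOn_vU1 h0 (ha) (he4a))).smul (he5a))).add ((((contOn_vU1g h0 (ha) (he4a) (he5a) (he5e4a))).smul (ha))))))

theorem contOn_vTggg {n : ℕ} {β : Type} [TopologicalSpace β] {S : Set β}
    {fa fe4a fe5a fe5e4a fe6a fe6e4a fe6e5a fe6e5e4a : β → EuclideanSpace ℝ (Fin n)} (h0 : ∀ z ∈ S, fa z ≠ 0) (ha : ContinuousOn fa S) (he4a : ContinuousOn fe4a S) (he5a : ContinuousOn fe5a S) (he5e4a : ContinuousOn fe5e4a S) (he6a : ContinuousOn fe6a S) (he6e4a : ContinuousOn fe6e4a S) (he6e5a : ContinuousOn fe6e5a S) (he6e5e4a : ContinuousOn fe6e5e4a S) :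
    ContinuousOn (fun z => vTggg (fa z) (fe4a z) (fe5a z) (fe5e4a z) (fe6a z) (fe6e4a z) (fe6e5a z) (fe6e5e4a z)) S := by
  exact (((((((((contOn_vU h0 (ha))).smul (he6e5e4a))).add ((((contOn_vU1 h0 (ha) (he6a))).smul (he5e4a))))).add ((((((contOn_vU1 h0 (ha) (he5a))).smul (he6e4a))).add ((((contOn_vU1g h0 (ha) (he5a) (he6a) (he6e5a))).smul (he4a))))))).add ((((((((contOn_vU1 h0 (ha) (he4a))).smul (he6e5a))).add ((((contOn_vU1g h0 (ha) (he4a) (he6a) (he6e4a))).smul (he5a))))).add ((((((contOn_vU1g h0 (ha) (he4a) (he5a) (he5e4a))).smul (he6a))).add ((((contOn_vU1gg h0 (ha) (he4a) (he5a) (he5e4a) (he6a) (he6e4a) (he6e5a) (he6e5e4a))).smul (ha))))))))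

theorem contOn_vK {n : ℕ} {β : Type} [TopologicalSpace β] {S : Set β}
    {fa fb : β → EuclideanSpace ℝ (Fin n)} (h0 : ∀ z ∈ S, fa z ≠ 0) (ha : ContinuousOn fa S) (hb : ContinuousOn fb S) :
    ContinuousOn (fun z => vK (fa z) (fb z)) S := by
  exact (((contOn_vU h0 (ha))).smul ((contOn_vTg h0 (ha) (hb))))

theorem contOn_vKg {n : ℕ} {β : Type} [TopologicalSpace β] {S : Set β}
    {fa fb fe7a fe7b : β → EuclideanSpace ℝ (Fin n)} (h0 : ∀ z ∈ S, fa z ≠ 0) (ha : ContinuousOn fa S) (hb : ContinuousOn fb S) (he7a : ContinuousOn fe7a S) (he7b : ContinuousOn fe7b S) :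
    ContinuousOn (fun z => vKg (fa z) (fb z) (fe7a z) (fe7b z)) S := by
  exact (((((contOn_vU h0 (ha))).smul ((contOn_vTgg h0 (ha) (hb) (he7a) (he7b))))).add ((((contOn_vU1 h0 (ha) (he7a))).smul ((contOn_vTg h0 (ha) (hb))))))

theorem contOn_vKgg {n : ℕ} {β : Type} [TopologicalSpace β] {S : Set β}
    {fa fb fe7a fe7b fe8a fe8b fe8e7a fe8e7b : β → EuclideanSpace ℝ (Fin n)} (h0 : ∀ z ∈ S, fa z ≠ 0) (ha : ContinuousOn fa S) (hb : ContinuousOn fb S) (he7a : ContinuousOn fe7a S) (he7b : ContinuousOn fe7b S) (he8a : ContinuousOn fe8a S) (he8b : ContinuousOn fe8b S) (he8e7a : ContinuousOn fe8e7a S) (he8e7b : ContinuousOn fe8e7b S) :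
    ContinuousOn (fun z => vKgg (fa z) (fb z) (fe7a z) (fe7b z) (fe8a z) (fe8b z) (fe8e7a z) (fe8e7b z)) S := by
  exact (((((((contOn_vU h0 (ha))).smul ((contOn_vTggg h0 (ha) (hb) (he7a) (he7b) (he8a) (he8b) (he8e7a) (he8e7b))))).add ((((contOn_vU1 h0 (ha) (he8a))).smul ((contOn_vTgg h0 (ha) (hb) (he7a) (he7b))))))).add ((((((contOn_vU1 h0 (ha) (he7a))).smul ((contOn_vTgg h0 (ha) (hb) (he8a) (he8b))))).add ((((contOn_vU1g h0 (ha) (he7a) (he8a) (he8e7a))).smul ((contOn_vTg h0 (ha) (hb))))))))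

theorem contOn_vSK {n : ℕ} {β : Type} [TopologicalSpace β] {S : Set β}
    {fa fb fc : β → EuclideanSpace ℝ (Fin n)} (h0 : ∀ z ∈ S, fa z ≠ 0) (ha : ContinuousOn fa S) (hb : ContinuousOn fb S) (hc : ContinuousOn fc S) :
    ContinuousOn (fun z => vSK (fa z) (fb z) (fc z)) S := by
  exact (((((contOn_vU h0 (ha))).smul ((contOn_vKg h0 (ha) (hb) (hb) (hc))))).sub ((((((((contOn_vU h0 (ha))).smul ((contOn_vKg h0 (ha) (hb) (hb) (hc))))).inner (𝕜 := ℝ) ((contOn_vT h0 (ha))))).smul ((contOn_vT h0 (ha))))))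

theorem contOn_vSKg {n : ℕ} {β : Type} [TopologicalSpace β] {S : Set β}
    {fa fb fc fe9a fe9b fe9c : β → EuclideanSpace ℝ (Fin n)} (h0 : ∀ z ∈ S, fa z ≠ 0) (ha : ContinuousOn fa S) (hb : ContinuousOn fb S) (hc : ContinuousOn fc S) (he9a : ContinuousOn fe9a S) (he9b : ContinuousOn fe9b S) (he9c : ContinuousOn fe9c S) :
    ContinuousOn (fun z => vSKg (fa z) (fb z) (fc z) (fe9a z) (fe9b z) (fe9c z)) S := by
  exact (((((((contOn_vU h0 (ha))).smul ((contOn_vKgg h0 (ha) (hb) (hb) (hc) (he9a) (he9b) (he9b) (he9c))))).add ((((contOn_vU1 h0 (ha) (he9a))).smul ((contOn_vKg h0 (ha) (hb) (hb) (hc))))))).sub ((((((((((contOn_vU h0 (ha))).smul ((contOn_vKg h0 (ha) (hb) (hb) (hc))))).inner (𝕜 := ℝ) ((contOn_vT h0 (ha))))).smul ((contOn_vTg h0 (ha) (he9a))))).add ((((((((((contOn_vU h0 (ha))).smul ((contOn_vKg h0 (ha) (hb) (hb) (hc))))).inner (𝕜 := ℝ) ((contOn_vTg h0 (ha) (he9a))))).add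 ((((((((contOn_vU h0 (ha))).smul ((contOn_vKgg h0 (ha) (hb) (hb) (hc) (he9a) (he9b) (he9b) (he9c))))).add ((((contOn_vU1 h0 (ha) (he9a))).smul ((contOn_vKg h0 (ha) (hb) (hb) (hc))))))).inner (𝕜 := ℝ) ((contOn_vT h0 (ha))))))).smul ((contOn_vT h0 (ha))))))))

theorem contOn_vSSK {n : ℕ} {β : Type} [TopologicalSpace β] {S : Set β}
    {fa fb fc fd : β → EuclideanSpace ℝ (Fin n)} (h0 : ∀ z ∈ S, fa z ≠ 0) (ha : ContinuousOn fa S) (hb : ContinuousOn fb S) (hc : ContinuousOn fc S) (hd : ContinuousOn fd S) :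
    ContinuousOn (fun z => vSSK (fa z) (fb z) (fc z) (fd z)) S := by
  exact (((((contOn_vU h0 (ha))).smul ((contOn_vSKg h0 (ha) (hb) (hc) (hb) (hc) (hd))))).sub ((((((((contOn_vU h0 (ha))).smul ((contOn_vSKg h0 (ha) (hb) (hc) (hb) (hc) (hd))))).inner (𝕜 := ℝ) ((contOn_vT h0 (ha))))).smul ((contOn_vT h0 (ha))))))

theorem contOn_vV {n : ℕ} {β : Type} [TopologicalSpace β] {S : Set β}
    {fa fp : β → EuclideanSpace ℝ (Fin n)} (h0 : ∀ z ∈ S, fa z ≠ 0) (ha : ContinuousOn fa S) (hp : ContinuousOn fp S) :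
    ContinuousOn (fun z => vV (fa z) (fp z)) S := by
  exact ((hp).sub (((((hp).inner (𝕜 := ℝ) ((contOn_vT h0 (ha))))).smul ((contOn_vT h0 (ha))))))

theorem contOn_vVg {n : ℕ} {β : Type} [TopologicalSpace β] {S : Set β}
    {fa fp fe10a fe10p : β → EuclideanSpace ℝ (Fin n)} (h0 : ∀ z ∈ S, fa z ≠ 0) (ha : ContinuousOn fa S) (hp : ContinuousOn fp S) (he10a : ContinuousOn fe10a S) (he10p : ContinuousOn fe10p S) :
    ContinuousOn (fun z => vVg (fa z) (fp z) (fe10a z) (fe10p z)) S := by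
  exact ((he10p).sub (((((((hp).inner (𝕜 := ℝ) ((contOn_vT h0 (ha))))).smul ((contOn_vTg h0 (ha) (he10a))))).add (((((((hp).inner (𝕜 := ℝ) ((contOn_vTg h0 (ha) (he10a))))).add (((he10p).inner (𝕜 := ℝ) ((contOn_vT h0 (ha))))))).smul ((contOn_vT h0 (ha))))))))

theorem contOn_vVgg {n : ℕ} {β : Type} [TopologicalSpace β] {S : Set β}
    {fa fp fe10a fe10p fe11a fe11p fe11e10a fe11e10p : β → EuclideanSpace ℝ (Fin n)} (h0 : ∀ z ∈ S, fa z ≠ 0) (ha : ContinuousOn fa S) (hp : ContinuousOn fp S) (he10a : ContinuousOn fe10a S) (he10p : ContinuousOn fe10p S) (he11a : ContinuousOn fe11a S) (he11p : ContinuousOn fe11p S) (he11e10a : ContinuousOn fe11e10a S) (he11e10p : ContinuousOn fe11e10p S) :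
    ContinuousOn (fun z => vVgg (fa z) (fp z) (fe10a z) (fe10p z) (fe11a z) (fe11p z) (fe11e10a z) (fe11e10p z)) S := by
  exact ((he11e10p).sub (((((((((hp).inner (𝕜 := ℝ) ((contOn_vT h0 (ha))))).smul ((contOn_vTgg h0 (ha) (he10a) (he11a) (he11e10a))))).add (((((((hp).inner (𝕜 := ℝ) ((contOn_vTg h0 (ha) (he11a))))).add (((he11p).inner (𝕜 := ℝ) ((contOn_vT h0 (ha))))))).smul ((contOn_vTg h0 (ha) (he10a))))))).add (((((((((hp).inner (𝕜 := ℝ) ((contOn_vTg h0 (ha) (he10a))))).add (((he10p).inner (𝕜 := ℝ) ((contOn_vT h0 (ha))))))).smul ((contOn_vTg h0 (ha) (he11a))))).add (((((((((hp).inner (𝕜 := ℝ) ((contOn_vTgg h0 (ha) (he10a) (he11a) (he11e10a))))).add (((he11p).inner (𝕜 := ℝ) ((contOn_vTg h0 (ha) (he10a))))))).add (((((he10p).inner (𝕜 := ℝ) ((contOn_vTg h0 (ha) (he11a))))).add (((he11e10p).inner (𝕜 := ℝ) ((contOn_vT h0 (ha))))))))).smul ((contOn_vT h0 (ha)))))))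)))

theorem contOn_vSV {n : ℕ} {β : Type} [TopologicalSpace β] {S : Set β}
    {fa fb fp fq : β → EuclideanSpace ℝ (Fin n)} (h0 : ∀ z ∈ S, fa z ≠ 0) (ha : ContinuousOn fa S) (hb : ContinuousOn fb S) (hp : ContinuousOn fp S) (hq : ContinuousOn fq S) :
    ContinuousOn (fun z => vSV (fa z) (fb z) (fp z) (fq z)) S := by
  exact (((((contOn_vU h0 (ha))).smul ((contOn_vVg h0 (ha) (hp) (hb) (hq))))).sub ((((((((contOn_vU h0 (ha))).smul ((contOn_vVg h0 (ha) (hp) (hb) (hq))))).inner (𝕜 := ℝ) ((contOn_vT h0 (ha))))).smul ((contOn_vT h0 (ha))))))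

theorem contOn_vSVg {n : ℕ} {β : Type} [TopologicalSpace β] {S : Set β}
    {fa fb fp fq fe12a fe12b fe12p fe12q : β → EuclideanSpace ℝ (Fin n)} (h0 : ∀ z ∈ S, fa z ≠ 0) (ha : ContinuousOn fa S) (hb : ContinuousOn fb S) (hp : ContinuousOn fp S) (hq : ContinuousOn fq S) (he12a : ContinuousOn fe12a S) (he12b : ContinuousOn fe12b S) (he12p : ContinuousOn fe12p S) (he12q : ContinuousOn fe12q S) :
    ContinuousOn (fun z => vSVg (fa z) (fb z) (fp z) (fq z) (fe12a z) (fe12b z) (fe12p z) (fe12q z)) S := by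
  exact (((((((contOn_vU h0 (ha))).smul ((contOn_vVgg h0 (ha) (hp) (hb) (hq) (he12a) (he12p) (he12b) (he12q))))).add ((((contOn_vU1 h0 (ha) (he12a))).smul ((contOn_vVg h0 (ha) (hp) (hb) (hq))))))).sub ((((((((((contOn_vU h0 (ha))).smul ((contOn_vVg h0 (ha) (hp) (hb) (hq))))).inner (𝕜 := ℝ) ((contOn_vT h0 (ha))))).smul ((contOn_vTg h0 (ha) (he12a))))).add ((((((((((contOn_vU h0 (ha))).smul ((contOn_vVg h0 (ha) (hp) (hb) (hq))))).inner (𝕜 := ℝ) ((contOn_vTg h0 (ha) (he12a))))).add ((((((((contOn_vU h0 (ha))).smul ((contOn_vVgg h0 (ha) (hp) (hb) (hq) (he12a) (he12p) (he12b) (he12q))))).add ((((contOn_vU1 h0 (ha) (he12a))).smul ((contOn_vVg h0 (ha) (hp) (hb) (hq))))))).inner (𝕜 := ℝ) ((contOn_vT h0 (ha))))))).smul ((contOn_vT h0 (ha))))))))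

theorem contOn_vPhi {n : ℕ} {β : Type} [TopologicalSpace β] {S : Set β}
    {fa fp : β → EuclideanSpace ℝ (Fin n)} (h0 : ∀ z ∈ S, fa z ≠ 0) (ha : ContinuousOn fa S) (hp : ContinuousOn fp S) :
    ContinuousOn (fun z => vPhi (fa z) (fp z)) S := by
  exact ((hp).inner (𝕜 := ℝ) ((contOn_vT h0 (ha))))

theorem contOn_vPhig {n : ℕ} {β : Type} [TopologicalSpace β] {S : Set β}
    {fa fp fe13a fe13p : β → EuclideanSpace ℝ (Fin n)} (h0 : ∀ z ∈ S, fa z ≠ 0) (ha : ContinuousOn fa S) (hp : ContinuousOn fp S) (he13a : ContinuousOn fe13a S) (he13p : ContinuousOn fe13p S) :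
    ContinuousOn (fun z => vPhig (fa z) (fp z) (fe13a z) (fe13p z)) S := by
  exact ((((hp).inner (𝕜 := ℝ) ((contOn_vTg h0 (ha) (he13a))))).add (((he13p).inner (𝕜 := ℝ) ((contOn_vT h0 (ha))))))

theorem contOn_vFJ {n : ℕ} {β : Type} [TopologicalSpace β] {S : Set β}
    {fa fb fc fp fq : β → EuclideanSpace ℝ (Fin n)} (h0 : ∀ z ∈ S, fa z ≠ 0) (ha : ContinuousOn fa S) (hb : ContinuousOn fb S) (hc : ContinuousOn fc S) (hp : ContinuousOn fp S) (hq : ContinuousOn fq S) :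
    ContinuousOn (fun z => vFJ (fa z) (fb z) (fc z) (fp z) (fq z)) S := by
  exact (((((continuousOn_const.mul ((((contOn_vK h0 (ha) (hb))).inner (𝕜 := ℝ) ((contOn_vSV h0 (ha) (hb) (hp) (hq))))))).sub ((continuousOn_const.mul ((((contOn_vSK h0 (ha) (hb) (hc))).inner (𝕜 := ℝ) ((contOn_vV h0 (ha) (hp))))))))).add ((((contOn_vPhi h0 (ha) (hp))).mul ((((contOn_vK h0 (ha) (hb))).inner (𝕜 := ℝ) ((contOn_vK h0 (ha) (hb))))))))

theorem contOn_vFJg {n : ℕ} {β : Type} [TopologicalSpace β] {S : Set β}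
    {fa fb fc fp fq fe14a fe14b fe14c fe14p fe14q : β → EuclideanSpace ℝ (Fin n)} (h0 : ∀ z ∈ S, fa z ≠ 0) (ha : ContinuousOn fa S) (hb : ContinuousOn fb S) (hc : ContinuousOn fc S) (hp : ContinuousOn fp S) (hq : ContinuousOn fq S) (he14a : ContinuousOn fe14a S) (he14b : ContinuousOn fe14b S) (he14c : ContinuousOn fe14c S) (he14p : ContinuousOn fe14p S) (he14q : ContinuousOn fe14q S) :
    ContinuousOn (fun z => vFJg (fa z) (fb z) (fc z) (fp z) (fq z) (fe14a z) (fe14b z) (fe14c z) (fe14p z) (fe14q z)) S := by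
  exact (((((continuousOn_const.mul ((((((contOn_vK h0 (ha) (hb))).inner (𝕜 := ℝ) ((contOn_vSVg h0 (ha) (hb) (hp) (hq) (he14a) (he14b) (he14p) (he14q))))).add ((((contOn_vKg h0 (ha) (hb) (he14a) (he14b))).inner (𝕜 := ℝ) ((contOn_vSV h0 (ha) (hb) (hp) (hq))))))))).sub ((continuousOn_const.mul ((((((contOn_vSK h0 (ha) (hb) (hc))).inner (𝕜 := ℝ) ((contOn_vVg h0 (ha) (hp) (he14a) (he14p))))).add ((((contOn_vSKg h0 (ha) (hb) (hc) (he14a) (he14b) (he14c))).inner (𝕜 := ℝ) ((contOn_vV h0 (ha) (hp))))))))))).add ((((((contOn_vPhig h0 (ha) (hp) (he14a) (he14p))).mul ((((contOn_vK h0 (ha) (hb))).inner (𝕜 := ℝ) ((contOn_vK h0 (ha) (hb))))))).add ((((contOn_vPhi h0 (ha) (hp))).mul ((((((contOn_vK h0 (ha) (hb))).inner (𝕜 := ℝ) ((contOn_vKg h0 (ha) (hb) (he14a) (he14b))))).add ((((contOn_vKg h0 (ha) (hb) (he14a) (he14b))).inner (𝕜 := ℝ) ((contOn_vK h0 (ha)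 (hb))))))))))))

theorem contOn_vGJ {n : ℕ} {β : Type} [TopologicalSpace β] {S : Set β}
    {fa fb fc fd fp : β → EuclideanSpace ℝ (Fin n)} (h0 : ∀ z ∈ S, fa z ≠ 0) (ha : ContinuousOn fa S) (hb : ContinuousOn fb S) (hc : ContinuousOn fc S) (hd : ContinuousOn fd S) (hp : ContinuousOn fp S) :
    ContinuousOn (fun z => vGJ (fa z) (fb z) (fc z) (fd z) (fp z)) S := by
  exact (((((((((contOn_vSSK h0 (ha) (hb) (hc) (hd))).const_smul ((2:ℝ)))).add ((((((contOn_vK h0 (ha) (hb))).inner (𝕜 := ℝ) ((contOn_vK h0 (ha) (hb))))).smul ((contOn_vK h0 (ha) (hb))))))).inner (𝕜 := ℝ) ((contOn_vV h0 (ha) (hp))))).mul (((ha).norm)))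

theorem contOn_vEJ {n : ℕ} {β : Type} [TopologicalSpace β] {S : Set β}
    {fa fb : β → EuclideanSpace ℝ (Fin n)} (h0 : ∀ z ∈ S, fa z ≠ 0) (ha : ContinuousOn fa S) (hb : ContinuousOn fb S) :
    ContinuousOn (fun z => vEJ (fa z) (fb z)) S := by
  exact (((((contOn_vK h0 (ha) (hb))).inner (𝕜 := ℝ) ((contOn_vK h0 (ha) (hb))))).mul (((ha).norm)))

theorem contOn_vEJg {n : ℕ} {β : Type} [TopologicalSpace β] {S : Set β}
    {fa fb fe15a fe15b : β → EuclideanSpace ℝ (Fin n)} (h0 : ∀ z ∈ S, fa z ≠ 0) (ha : ContinuousOn fa S) (hb : ContinuousOn fb S) (he15a : ContinuousOn fe15a S) (he15b : ContinuousOn fe15b S) :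
    ContinuousOn (fun z => vEJg (fa z) (fb z) (fe15a z) (fe15b z)) S := by
  exact (((((((((contOn_vK h0 (ha) (hb))).inner (𝕜 := ℝ) ((contOn_vKg h0 (ha) (hb) (he15a) (he15b))))).add ((((contOn_vKg h0 (ha) (hb) (he15a) (he15b))).inner (𝕜 := ℝ) ((contOn_vK h0 (ha) (hb))))))).mul (((ha).norm)))).add ((((((contOn_vK h0 (ha) (hb))).inner (𝕜 := ℝ) ((contOn_vK h0 (ha) (hb))))).mul ((contOn_vW1 h0 (ha) (he15a))))))


set_option maxHeartbeats 16000000 in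
theorem jet_identity {n : ℕ} (a b c d p q r : EuclideanSpace ℝ (Fin n)) (h0 : a ≠ 0) :
    vEJg a b q r = vGJ a b c d p + vFJg a b c p q b c d q r := by
  have hn : ‖a‖ ≠ 0 := norm_ne_zero_iff.mpr h0
  simp only [vEJg, vGJ, vFJg, vEJ, vFJ, vSSK, vSVg, vSV, vSKg, vSK, vVgg, vVg, vV, vPhig, vPhi,
    vKgg, vKg, vK, vTggg, vTgg, vTg, vT, vU1gg, vU1g, vU1, vW1, vU]
  simp only [inner_add_left, inner_add_right, inner_sub_left, inner_sub_right,
    inner_neg_left, inner_neg_right, real_inner_smul_left, real_inner_smul_right,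
    inner_neg_neg]
  simp only [real_inner_self_eq_norm_sq]
  simp only [real_inner_comm]
  field_simp
  ring

/-! ### Jets of a family -/

def jet0 {n : ℕ} (γ : ℝ → ℝ → EuclideanSpace ℝ (Fin n)) : ℝ × ℝ → EuclideanSpace ℝ (Fin n) :=
  fun p => γ p.1 p.2

def ja {n : ℕ} (γ : ℝ → ℝ → EuclideanSpace ℝ (Fin n)) := pdx (jet0 γ)
def jb {n : ℕ} (γ : ℝ → ℝ → EuclideanSpace ℝ (Fin n)) := pdx (ja γ)
def jc {n : ℕ} (γ : ℝ → ℝ → EuclideanSpace ℝ (Fin n)) := pdx (jb γ)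
def jd {n : ℕ} (γ : ℝ → ℝ → EuclideanSpace ℝ (Fin n)) := pdx (jc γ)
def jp {n : ℕ} (γ : ℝ → ℝ → EuclideanSpace ℝ (Fin n)) := pdt (jet0 γ)
def jq {n : ℕ} (γ : ℝ → ℝ → EuclideanSpace ℝ (Fin n)) := pdx (jp γ)
def jr {n : ℕ} (γ : ℝ → ℝ → EuclideanSpace ℝ (Fin n)) := pdx (jq γ)

section Bridges

variable {n : ℕ} {γ : ℝ → ℝ → EuclideanSpace ℝ (Fin n)}
  (hγ : ContDiff ℝ (⊤ : ℕ∞) (jet0 γ))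

include hγ

theorem hg (s y : ℝ) : HasDerivAt (γ s) (ja γ (s, y)) y := hasDerivAt_pdx hγ s y

theorem hajx (s y : ℝ) : HasDerivAt (fun y' => ja γ (s, y')) (jb γ (s, y)) y :=
  hasDerivAt_pdx (contDiff_pdx hγ) s y

theorem hbjx (s y : ℝ) : HasDerivAt (fun y' => jb γ (s, y')) (jc γ (s, y)) y :=
  hasDerivAt_pdx (contDiff_pdx (contDiff_pdx hγ)) s y

theorem hcjx (s y : ℝ) : HasDerivAt (fun y' => jc γ (s, y')) (jd γ (s, y)) y :=
  hasDerivAt_pdx (contDiff_pdx (contDiff_pdx (contDiff_pdx hγ))) s y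

theorem hpjx (s y : ℝ) : HasDerivAt (fun y' => jp γ (s, y')) (jq γ (s, y)) y :=
  hasDerivAt_pdx (contDiff_pdt hγ) s y

theorem hqjx (s y : ℝ) : HasDerivAt (fun y' => jq γ (s, y')) (jr γ (s, y)) y :=
  hasDerivAt_pdx (contDiff_pdx (contDiff_pdt hγ)) s y

theorem hajt (s x : ℝ) : HasDerivAt (fun u => ja γ (u, x)) (jq γ (s, x)) s := by
  have h := hasDerivAt_pdt (contDiff_pdx hγ) s x
  have e : pdt (pdx (jet0 γ)) = pdx (pdt (jet0 γ)) := pdt_pdx hγ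
  rw [e] at h
  exact h

theorem hbjt (s x : ℝ) : HasDerivAt (fun u => jb γ (u, x)) (jr γ (s, x)) s := by
  have h := hasDerivAt_pdt (contDiff_pdx (contDiff_pdx hγ)) s x
  have e1 : pdt (pdx (pdx (jet0 γ))) = pdx (pdt (pdx (jet0 γ))) := pdt_pdx (contDiff_pdx hγ)
  have e2 : pdt (pdx (jet0 γ)) = pdx (pdt (jet0 γ)) := pdt_pdx hγ
  rw [e1, e2] at h
  exact h

theorem jderiv_eq (s y : ℝ) : deriv (γ s) y = ja γ (s, y) := (hg hγ s y).deriv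

theorem utang_eq (s : ℝ) : utang (γ s) = fun y => vT (ja γ (s, y)) := by
  funext y
  simp only [utang, aderiv, vT, vU]
  rw [jderiv_eq hγ]

theorem utang_hasDeriv {s y : ℝ} (h0 : ja γ (s, y) ≠ 0) :
    HasDerivAt (utang (γ s)) (vTg (ja γ (s, y)) (jb γ (s, y))) y := by
  rw [utang_eq hγ s]
  exact hasDerivAt_vT h0 (hajx hγ s y)

theorem curvV_eq {s y : ℝ} (h0 : ja γ (s, y) ≠ 0) :
    curvV (γ s) y = vK (ja γ (s, y)) (jb γ (s, y)) := by
  simp only [curvV, aderiv, vK, vU]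
  rw [jderiv_eq hγ, (utang_hasDeriv hγ h0).deriv]

theorem curvV_hasDeriv {s y : ℝ} (hev : ∀ᶠ y' in nhds y, ja γ (s, y') ≠ 0) :
    HasDerivAt (curvV (γ s))
      (vKg (ja γ (s, y)) (jb γ (s, y)) (jb γ (s, y)) (jc γ (s, y))) y := by
  have h0 := hev.self_of_nhds
  exact (hasDerivAt_vK h0 (hajx hγ s y) (hbjx hγ s y)).congr_of_eventuallyEq
    (hev.mono fun y' h => curvV_eq hγ h)

theorem aderivP_curvV_eq {s y : ℝ} (hev : ∀ᶠ y' in nhds y, ja γ (s, y') ≠ 0) :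
    aderivP (γ s) (curvV (γ s)) y = vSK (ja γ (s, y)) (jb γ (s, y)) (jc γ (s, y)) := by
  have h0 := hev.self_of_nhds
  simp only [aderivP, nperp, aderiv, vSK, vU]
  rw [jderiv_eq hγ, (curvV_hasDeriv hγ hev).deriv, utang_eq hγ s]

theorem aderivP_curvV_hasDeriv {s y : ℝ} (hev : ∀ᶠ y' in nhds y, ja γ (s, y') ≠ 0) :
    HasDerivAt (aderivP (γ s) (curvV (γ s)))
      (vSKg (ja γ (s, y)) (jb γ (s, y)) (jc γ (s, y))
        (jb γ (s, y)) (jc γ (s, y)) (jd γ (s, y))) y := by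
  have h0 := hev.self_of_nhds
  exact (hasDerivAt_vSK h0 (hajx hγ s y) (hbjx hγ s y) (hcjx hγ s y)).congr_of_eventuallyEq
    (hev.eventually_nhds.mono fun y' h => aderivP_curvV_eq hγ h)

theorem aderivPIter_two_eq {s y : ℝ} (hev : ∀ᶠ y' in nhds y, ja γ (s, y') ≠ 0) :
    aderivPIter (γ s) 2 (curvV (γ s)) y
      = vSSK (ja γ (s, y)) (jb γ (s, y)) (jc γ (s, y)) (jd γ (s, y)) := by
  show aderivP (γ s) (aderivP (γ s) (aderivPIter (γ s) 0 (curvV (γ s)))) y = _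
  simp only [aderivPIter]
  simp only [aderivP, nperp, aderiv, vSSK, vU]
  rw [jderiv_eq hγ, utang_eq hγ s]
  have hD := aderivP_curvV_hasDeriv hγ hev
  have : deriv (nperp (γ s) (aderiv (γ s) (curvV (γ s)))) y
      = vSKg (ja γ (s, y)) (jb γ (s, y)) (jc γ (s, y)) (jb γ (s, y)) (jc γ (s, y))
          (jd γ (s, y)) := hD.deriv
  rw [this]

theorem timeD_eq (s y : ℝ) : timeD γ s y = jp γ (s, y) := (hasDerivAt_pdt hγ s y).deriv

theorem tanSpeed_eq (s y : ℝ) : tanSpeed γ s y = vPhi (ja γ (s, y)) (jp γ (s, y)) := by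
  simp only [tanSpeed, vPhi]
  rw [timeD_eq hγ, utang_eq hγ s]

theorem normalVel_eq (s : ℝ) :
    normalVel γ s = fun y => vV (ja γ (s, y)) (jp γ (s, y)) := by
  funext y
  simp only [normalVel, vV, tanSpeed]
  rw [timeD_eq hγ, utang_eq hγ s]

theorem normalVel_hasDeriv {s y : ℝ} (h0 : ja γ (s, y) ≠ 0) :
    HasDerivAt (normalVel γ s)
      (vVg (ja γ (s, y)) (jp γ (s, y)) (jb γ (s, y)) (jq γ (s, y))) y := by
  rw [normalVel_eq hγ s]
  exact hasDerivAt_vV h0 (hajx hγ s y) (hpjx hγ s y)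

theorem aderivP_nv_eq {s y : ℝ} (h0 : ja γ (s, y) ≠ 0) :
    aderivP (γ s) (normalVel γ s) y
      = vSV (ja γ (s, y)) (jb γ (s, y)) (jp γ (s, y)) (jq γ (s, y)) := by
  simp only [aderivP, nperp, aderiv, vSV, vU]
  rw [jderiv_eq hγ, (normalVel_hasDeriv hγ h0).deriv, utang_eq hγ s]

theorem aderivP_nv_hasDeriv {s y : ℝ} (hev : ∀ᶠ y' in nhds y, ja γ (s, y') ≠ 0) :
    HasDerivAt (aderivP (γ s) (normalVel γ s))
      (vSVg (ja γ (s, y)) (jb γ (s, y)) (jp γ (s, y)) (jq γ (s, y))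
        (jb γ (s, y)) (jc γ (s, y)) (jq γ (s, y)) (jr γ (s, y))) y := by
  have h0 := hev.self_of_nhds
  exact (hasDerivAt_vSV h0 (hajx hγ s y) (hbjx hγ s y) (hpjx hγ s y)
    (hqjx hγ s y)).congr_of_eventuallyEq (hev.mono fun y' h => aderivP_nv_eq hγ h)

theorem eJ_eq {s y : ℝ} (h0 : ja γ (s, y) ≠ 0) :
    ‖curvV (γ s) y‖ ^ 2 * ‖deriv (γ s) y‖ = vEJ (ja γ (s, y)) (jb γ (s, y)) := by
  rw [curvV_eq hγ h0, jderiv_eq hγ]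
  simp only [vEJ]
  rw [real_inner_self_eq_norm_sq]

theorem eJ_hasDerivT {s x : ℝ} (h0 : ja γ (s, x) ≠ 0) :
    HasDerivAt (fun u => vEJ (ja γ (u, x)) (jb γ (u, x)))
      (vEJg (ja γ (s, x)) (jb γ (s, x)) (jq γ (s, x)) (jr γ (s, x))) s :=
  hasDerivAt_vEJ h0 (hajt hγ s x) (hbjt hγ s x)

end Bridges



set_option maxHeartbeats 1000000

/-- first variation of the elastic energy along a family of immersions. -/
theorem statement1
    (n : ℕ) (hn : 2 ≤ n) (T : ℝ) (hT : 0 < T)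
    (γ : ℝ → ℝ → EuclideanSpace ℝ (Fin n))
    (hγ : ContDiff ℝ (⊤ : ℕ∞) (fun p : ℝ × ℝ => γ p.1 p.2))
    (himm : ∀ t ∈ Ico (0:ℝ) T, ∀ x ∈ Icc (-1:ℝ) 1, deriv (γ t) x ≠ 0) :
    ∀ t ∈ Ico (0:ℝ) T,
      deriv (fun s => elE (γ s)) t
        = (∫ x in (-1:ℝ)..1,
            ⟪(2:ℝ) • aderivPIter (γ t) 2 (curvV (γ t)) x
                + ‖curvV (γ t) x‖ ^ 2 • curvV (γ t) x,
              normalVel γ t x⟫ * ‖deriv (γ t) x‖)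
          + ((2 * ⟪curvV (γ t) 1, aderivP (γ t) (normalVel γ t) 1⟫
                - 2 * ⟪aderivP (γ t) (curvV (γ t)) 1, normalVel γ t 1⟫
                + tanSpeed γ t 1 * ‖curvV (γ t) 1‖ ^ 2)
              - (2 * ⟪curvV (γ t) (-1), aderivP (γ t) (normalVel γ t) (-1)⟫
                - 2 * ⟪aderivP (γ t) (curvV (γ t)) (-1), normalVel γ t (-1)⟫
                + tanSpeed γ t (-1) * ‖curvV (γ t) (-1)‖ ^ 2)) := by

  intro t ht
  have hγJ : ContDiff ℝ (⊤ : ℕ∞) (jet0 γ) := hγ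
  have hca : Continuous (ja γ) := (contDiff_pdx hγJ).continuous
  have hcb : Continuous (jb γ) := (contDiff_pdx (contDiff_pdx hγJ)).continuous
  have hcc : Continuous (jc γ) :=
    (contDiff_pdx (contDiff_pdx (contDiff_pdx hγJ))).continuous
  have hcd : Continuous (jd γ) :=
    (contDiff_pdx (contDiff_pdx (contDiff_pdx (contDiff_pdx hγJ)))).continuous
  have hcp : Continuous (jp γ) := (contDiff_pdt hγJ).continuous
  have hcq : Continuous (jq γ) := (contDiff_pdx (contDiff_pdt hγJ)).continuous
  have hcr : Continuous (jr γ) := (contDiff_pdx (contDiff_pdx (contDiff_pdt hγJ))).continuous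
  have hIccU : uIcc (-1:ℝ) 1 = Icc (-1:ℝ) 1 := uIcc_of_le (by norm_num)
  have hsub1 : (Ι (-1:ℝ) 1) ⊆ Icc (-1:ℝ) 1 := by
    rw [uIoc_of_le (by norm_num : (-1:ℝ) ≤ 1)]
    exact Ioc_subset_Icc_self
  -- the open nonvanishing region and a thickening of {t} × [-1,1] inside it
  have hO : IsOpen {p : ℝ × ℝ | ja γ p ≠ 0} := isOpen_compl_singleton.preimage hca
  have hsub : ({t} ×ˢ Icc (-1:ℝ) 1) ⊆ {p : ℝ × ℝ | ja γ p ≠ 0} := by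
    rintro ⟨s, y⟩ ⟨hs, hy⟩
    simp only [mem_singleton_iff] at hs
    subst hs
    have h := himm s ht y hy
    rw [jderiv_eq hγJ] at h
    exact h
  obtain ⟨δ, hδ, hthick⟩ :=
    (isCompact_singleton.prod isCompact_Icc).exists_thickening_subset_open hO hsub
  have hrect : ∀ s : ℝ, |s - t| < δ → ∀ y ∈ Icc (-1:ℝ) 1, ja γ (s, y) ≠ 0 := by
    intro s hs y hy
    refine hthick ?_
    rw [Metric.mem_thickening_iff]
    refine ⟨(t, y), mem_prod.mpr ⟨rfl, hy⟩, ?_⟩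
    have hd : dist ((s, y) : ℝ × ℝ) ((t, y) : ℝ × ℝ) = |s - t| := by
      simp [Prod.dist_eq, Real.dist_eq, max_eq_left (abs_nonneg (s - t))]
    rw [hd]
    exact hs
  have hδ2 : 0 < δ / 2 := by positivity
  have hrect2 : ∀ s ∈ Metric.ball t (δ/2), ∀ y ∈ Icc (-1:ℝ) 1, ja γ (s, y) ≠ 0 := by
    intro s hs y hy
    refine hrect s ?_ y hy
    have : dist s t < δ / 2 := hs
    rw [Real.dist_eq] at this
    linarith
  have ht0 : ∀ y ∈ Icc (-1:ℝ) 1, ja γ (t, y) ≠ 0 := by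
    refine hrect t ?_
    simpa using hδ
  have hIev : ∀ y : ℝ, ja γ (t, y) ≠ 0 → ∀ᶠ y' in nhds y, ja γ (t, y') ≠ 0 := by
    intro y hy
    have hc : Continuous (fun y' => ja γ (t, y')) :=
      hca.comp (continuous_const.prodMk continuous_id)
    exact (isOpen_compl_singleton.preimage hc).eventually_mem hy
  -- Part C : differentiation under the integral sign
  have hmeas : ∀ s : ℝ, |s - t| < δ →
      AEStronglyMeasurable (fun x => ‖curvV (γ s) x‖ ^ 2 * ‖deriv (γ s) x‖)
        (volume.restrict (Ι (-1:ℝ) 1)) := by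
    intro s hs
    have h0 : ∀ y ∈ Ι (-1:ℝ) 1, ja γ (s, y) ≠ 0 := fun y hy => hrect s hs y (hsub1 hy)
    have hcon : ContinuousOn (fun x => vEJ (ja γ (s, x)) (jb γ (s, x))) (Ι (-1:ℝ) 1) :=
      contOn_vEJ h0 ((hca.comp (continuous_const.prodMk continuous_id)).continuousOn)
        ((hcb.comp (continuous_const.prodMk continuous_id)).continuousOn)
    refine (hcon.aestronglyMeasurable measurableSet_uIoc).congr ?_
    refine (ae_restrict_iff' measurableSet_uIoc).mpr (ae_of_all _ fun x hx => ?_)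
    exact (eJ_eq hγJ (h0 x hx)).symm
  have hint_t : IntervalIntegrable (fun x => ‖curvV (γ t) x‖ ^ 2 * ‖deriv (γ t) x‖)
      volume (-1) 1 := by
    have hcon : ContinuousOn (fun x => vEJ (ja γ (t, x)) (jb γ (t, x))) (uIcc (-1:ℝ) 1) := by
      rw [hIccU]
      exact contOn_vEJ ht0 ((hca.comp (continuous_const.prodMk continuous_id)).continuousOn)
        ((hcb.comp (continuous_const.prodMk continuous_id)).continuousOn)
    have h1 := hcon.intervalIntegrable (μ := volume)
    rw [intervalIntegrable_iff] at h1 ⊢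
    refine h1.congr ?_
    refine (ae_restrict_iff' measurableSet_uIoc).mpr (ae_of_all _ fun x hx => ?_)
    exact (eJ_eq hγJ (hrect t (by simpa using hδ) x (hsub1 hx))).symm
  have hmeas' : AEStronglyMeasurable
      (fun x => vEJg (ja γ (t, x)) (jb γ (t, x)) (jq γ (t, x)) (jr γ (t, x)))
      (volume.restrict (Ι (-1:ℝ) 1)) := by
    have h0 : ∀ y ∈ Ι (-1:ℝ) 1, ja γ (t, y) ≠ 0 := fun y hy => ht0 y (hsub1 hy)
    exact (contOn_vEJg h0
      ((hca.comp (continuous_const.prodMk continuous_id)).continuousOn)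
      ((hcb.comp (continuous_const.prodMk continuous_id)).continuousOn)
      ((hcq.comp (continuous_const.prodMk continuous_id)).continuousOn)
      ((hcr.comp (continuous_const.prodMk continuous_id)).continuousOn)).aestronglyMeasurable
      measurableSet_uIoc
  have hRsub : ∀ p ∈ (Icc (t - δ/2) (t + δ/2) ×ˢ Icc (-1:ℝ) 1), ja γ p ≠ 0 := by
    rintro ⟨s, y⟩ ⟨hs, hy⟩
    refine hrect s ?_ y hy
    rw [abs_sub_lt_iff]
    exact ⟨by linarith [hs.2], by linarith [hs.1]⟩
  have hFdcont : ContinuousOn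
      (fun p : ℝ × ℝ => vEJg (ja γ p) (jb γ p) (jq γ p) (jr γ p))
      (Icc (t - δ/2) (t + δ/2) ×ˢ Icc (-1:ℝ) 1) :=
    contOn_vEJg hRsub hca.continuousOn hcb.continuousOn hcq.continuousOn hcr.continuousOn
  obtain ⟨Cb, hCb⟩ :=
    (isCompact_Icc.prod isCompact_Icc).exists_bound_of_continuousOn hFdcont
  have hbound : ∀ᵐ x ∂(volume : Measure ℝ), x ∈ Ι (-1:ℝ) 1 →
      ∀ s ∈ Metric.ball t (δ/2),
        ‖vEJg (ja γ (s, x)) (jb γ (s, x)) (jq γ (s, x)) (jr γ (s, x))‖ ≤ Cb := by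
    refine ae_of_all _ fun x hx s hs => ?_
    refine hCb (s, x) (mem_prod.mpr ⟨?_, hsub1 hx⟩)
    have h1 : dist s t < δ / 2 := hs
    rw [Real.dist_eq, abs_sub_lt_iff] at h1
    exact ⟨by linarith [h1.2], by linarith [h1.1]⟩
  have hdiff : ∀ᵐ x ∂(volume : Measure ℝ), x ∈ Ι (-1:ℝ) 1 →
      ∀ s ∈ Metric.ball t (δ/2),
        HasDerivAt (fun u => ‖curvV (γ u) x‖ ^ 2 * ‖deriv (γ u) x‖)
          (vEJg (ja γ (s, x)) (jb γ (s, x)) (jq γ (s, x)) (jr γ (s, x))) s := by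
    refine ae_of_all _ fun x hx s hs => ?_
    have h0 : ja γ (s, x) ≠ 0 := hrect2 s hs x (hsub1 hx)
    refine (eJ_hasDerivT hγJ h0).congr_of_eventuallyEq ?_
    have hev : ∀ᶠ u in nhds s, u ∈ Metric.ball t (δ/2) :=
      Metric.isOpen_ball.eventually_mem hs
    exact hev.mono fun u hu => eJ_eq hγJ (hrect2 u hu x (hsub1 hx))
  have hevmeas : ∀ᶠ s in nhds t,
      AEStronglyMeasurable (fun x => ‖curvV (γ s) x‖ ^ 2 * ‖deriv (γ s) x‖)
        (volume.restrict (Ι (-1:ℝ) 1)) := by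
    have hev : ∀ᶠ s in nhds t, s ∈ Metric.ball t δ :=
      Metric.isOpen_ball.eventually_mem (Metric.mem_ball_self hδ)
    refine hev.mono fun s hs => hmeas s ?_
    have : dist s t < δ := hs
    rwa [Real.dist_eq] at this
  have hmain := intervalIntegral.hasDerivAt_integral_of_dominated_loc_of_deriv_le
    (F := fun s x => ‖curvV (γ s) x‖ ^ 2 * ‖deriv (γ s) x‖)
    (F' := fun s x => vEJg (ja γ (s, x)) (jb γ (s, x)) (jq γ (s, x)) (jr γ (s, x)))
    (x₀ := t) (a := (-1:ℝ)) (b := (1:ℝ)) (bound := fun _ => Cb)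
    (Metric.ball_mem_nhds t hδ2) hevmeas hint_t hmeas' hbound (intervalIntegrable_const) hdiff
  have HD : HasDerivAt (fun s => elE (γ s))
      (∫ x in (-1:ℝ)..1, vEJg (ja γ (t, x)) (jb γ (t, x)) (jq γ (t, x)) (jr γ (t, x))) t :=
    hmain.2
  -- bridges at time t
  have hGeq : ∀ y : ℝ, ja γ (t, y) ≠ 0 →
      (⟪(2:ℝ) • aderivPIter (γ t) 2 (curvV (γ t)) y
          + ‖curvV (γ t) y‖ ^ 2 • curvV (γ t) y, normalVel γ t y⟫ * ‖deriv (γ t) y‖)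
        = vGJ (ja γ (t, y)) (jb γ (t, y)) (jc γ (t, y)) (jd γ (t, y)) (jp γ (t, y)) := by
    intro y h0
    have hev := hIev y h0
    rw [aderivPIter_two_eq hγJ hev]
    simp only [curvV_eq hγJ h0, normalVel_eq hγJ t, jderiv_eq hγJ,
      ← real_inner_self_eq_norm_sq]
    rfl
  have hFbeq : ∀ y : ℝ, ja γ (t, y) ≠ 0 →
      (2 * ⟪curvV (γ t) y, aderivP (γ t) (normalVel γ t) y⟫
        - 2 * ⟪aderivP (γ t) (curvV (γ t)) y, normalVel γ t y⟫
        + tanSpeed γ t y * ‖curvV (γ t) y‖ ^ 2)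
      = vFJ (ja γ (t, y)) (jb γ (t, y)) (jc γ (t, y)) (jp γ (t, y)) (jq γ (t, y)) := by
    intro y h0
    have hev := hIev y h0
    rw [aderivP_nv_eq hγJ h0, aderivP_curvV_eq hγJ hev]
    simp only [curvV_eq hγJ h0, normalVel_eq hγJ t, tanSpeed_eq hγJ,
      ← real_inner_self_eq_norm_sq]
    rfl
  have hFbD : ∀ y ∈ uIcc (-1:ℝ) 1,
      HasDerivAt (fun y' => 2 * ⟪curvV (γ t) y', aderivP (γ t) (normalVel γ t) y'⟫
          - 2 * ⟪aderivP (γ t) (curvV (γ t)) y', normalVel γ t y'⟫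
          + tanSpeed γ t y' * ‖curvV (γ t) y'‖ ^ 2)
        (vFJg (ja γ (t, y)) (jb γ (t, y)) (jc γ (t, y)) (jp γ (t, y)) (jq γ (t, y))
          (jb γ (t, y)) (jc γ (t, y)) (jd γ (t, y)) (jq γ (t, y)) (jr γ (t, y))) y := by
    intro y hy
    rw [hIccU] at hy
    have h0 := ht0 y hy
    have hev := hIev y h0
    refine (hasDerivAt_vFJ h0 (hajx hγJ t y) (hbjx hγJ t y) (hcjx hγJ t y) (hpjx hγJ t y)
      (hqjx hγJ t y)).congr_of_eventuallyEq ?_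
    exact hev.mono fun y' h0' => hFbeq y' h0'
  have hFJgcont : ContinuousOn
      (fun y => vFJg (ja γ (t, y)) (jb γ (t, y)) (jc γ (t, y)) (jp γ (t, y)) (jq γ (t, y))
        (jb γ (t, y)) (jc γ (t, y)) (jd γ (t, y)) (jq γ (t, y)) (jr γ (t, y)))
      (uIcc (-1:ℝ) 1) := by
    rw [hIccU]
    have hcs : ∀ (f : ℝ × ℝ → EuclideanSpace ℝ (Fin n)), Continuous f →
        ContinuousOn (fun y => f (t, y)) (Icc (-1:ℝ) 1) := fun f hf =>
      (hf.comp (continuous_const.prodMk continuous_id)).continuousOn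
    exact contOn_vFJg ht0 (hcs _ hca) (hcs _ hcb) (hcs _ hcc) (hcs _ hcp) (hcs _ hcq)
      (hcs _ hcb) (hcs _ hcc) (hcs _ hcd) (hcs _ hcq) (hcs _ hcr)
  have hFJgInt := hFJgcont.intervalIntegrable (μ := volume)
  have hGfInt : IntervalIntegrable
      (fun y => ⟪(2:ℝ) • aderivPIter (γ t) 2 (curvV (γ t)) y
          + ‖curvV (γ t) y‖ ^ 2 • curvV (γ t) y, normalVel γ t y⟫ * ‖deriv (γ t) y‖)
      volume (-1) 1 := by
    have hcs : ∀ (f : ℝ × ℝ → EuclideanSpace ℝ (Fin n)), Continuous f →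
        ContinuousOn (fun y => f (t, y)) (Icc (-1:ℝ) 1) := fun f hf =>
      (hf.comp (continuous_const.prodMk continuous_id)).continuousOn
    have hcon : ContinuousOn
        (fun y => vGJ (ja γ (t, y)) (jb γ (t, y)) (jc γ (t, y)) (jd γ (t, y)) (jp γ (t, y)))
        (uIcc (-1:ℝ) 1) := by
      rw [hIccU]
      exact contOn_vGJ ht0 (hcs _ hca) (hcs _ hcb) (hcs _ hcc) (hcs _ hcd) (hcs _ hcp)
    have h1 := hcon.intervalIntegrable (μ := volume)
    rw [intervalIntegrable_iff] at h1 ⊢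
    refine h1.congr ?_
    refine (ae_restrict_iff' measurableSet_uIoc).mpr (ae_of_all _ fun x hx => ?_)
    exact (hGeq x (ht0 x (hsub1 hx))).symm
  have hFTC : (∫ y in (-1:ℝ)..1,
        vFJg (ja γ (t, y)) (jb γ (t, y)) (jc γ (t, y)) (jp γ (t, y)) (jq γ (t, y))
          (jb γ (t, y)) (jc γ (t, y)) (jd γ (t, y)) (jq γ (t, y)) (jr γ (t, y)))
      = (2 * ⟪curvV (γ t) 1, aderivP (γ t) (normalVel γ t) 1⟫
          - 2 * ⟪aderivP (γ t) (curvV (γ t)) 1, normalVel γ t 1⟫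
          + tanSpeed γ t 1 * ‖curvV (γ t) 1‖ ^ 2)
        - (2 * ⟪curvV (γ t) (-1), aderivP (γ t) (normalVel γ t) (-1)⟫
          - 2 * ⟪aderivP (γ t) (curvV (γ t)) (-1), normalVel γ t (-1)⟫
          + tanSpeed γ t (-1) * ‖curvV (γ t) (-1)‖ ^ 2) :=
    intervalIntegral.integral_eq_sub_of_hasDerivAt hFbD hFJgInt
  have hkey : EqOn
      (fun x => vEJg (ja γ (t, x)) (jb γ (t, x)) (jq γ (t, x)) (jr γ (t, x)))
      (fun x => (⟪(2:ℝ) • aderivPIter (γ t) 2 (curvV (γ t)) x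
            + ‖curvV (γ t) x‖ ^ 2 • curvV (γ t) x, normalVel γ t x⟫ * ‖deriv (γ t) x‖)
          + vFJg (ja γ (t, x)) (jb γ (t, x)) (jc γ (t, x)) (jp γ (t, x)) (jq γ (t, x))
            (jb γ (t, x)) (jc γ (t, x)) (jd γ (t, x)) (jq γ (t, x)) (jr γ (t, x)))
      (uIcc (-1:ℝ) 1) := by
    intro y hy
    rw [hIccU] at hy
    have h0 := ht0 y hy
    have hid := jet_identity (ja γ (t, y)) (jb γ (t, y)) (jc γ (t, y)) (jd γ (t, y))
      (jp γ (t, y)) (jq γ (t, y)) (jr γ (t, y)) h0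
    simp only
    rw [hGeq y h0]
    exact hid
  rw [HD.deriv, intervalIntegral.integral_congr hkey,
    intervalIntegral.integral_add hGfInt hFJgInt, hFTC]


end
end

section
/- Let ξ: ℝⁿ → ℝⁿ be smooth, S_x := −Dξ(x), and τ₀: {−1,1} → {−1,1}. Let γ: [0,T)×[-1,1] → ℝⁿ be a smooth family of immersions such that for all t ∈ [0,T) and x ∈ {−1,1}: ⟨∂_tγ(t,x), ∂_sγ(t,x)⟩ = 0 and ∂_sγ(t,x) = τ₀(x)ξ(γ(t,x)). Then, with V = (∂_tγ)^⊥ = ∂_tγ − ⟨∂_tγ, ∂_sγ⟩∂_sγ, one has ∂_s^⊥V(t,x) = −τ₀(x) S_{γ(t,x)} V(t,x) for all t ∈ [0,T) and x ∈ {−1,1}. -/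
open Set MeasureTheory Filter
open scoped RealInnerProductSpace

noncomputable section

variable {n : ℕ}

section helpers
variable {E : Type*} [NormedAddCommGroup E] [NormedSpace ℝ E]

lemma topLe (n : ℕ) : ((n : ℕ) : WithTop ℕ∞) ≤ ((⊤ : ℕ∞) : WithTop ℕ∞) :=
  ENat.natCast_le_of_coe_top_le_withTop le_rfl n

lemma contAt_deriv (f : ℝ → E) (t : ℝ) (hf : ContDiffAt ℝ (⊤ : ℕ∞) f t) :
    ContinuousAt (deriv f) t := by
  have h2 : (2 : WithTop ℕ∞) ≤ ((⊤ : ℕ∞) : WithTop ℕ∞) := by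
    exact_mod_cast topLe 2
  obtain ⟨u, hu, h'u⟩ := hf.contDiffOn (m := 2) h2 (by simp)
  rcases mem_nhds_iff.1 hu with ⟨v, vu, v_open, xv⟩
  exact ((h'u.mono vu).continuousOn_deriv_of_isOpen v_open (by norm_num)).continuousAt
    (v_open.mem_nhds xv)

lemma deriv_congr_Ico (f g : ℝ → E) (T t : ℝ) (ht : t ∈ Ico (0:ℝ) T)
    (hfg : ∀ s ∈ Ico (0:ℝ) T, f s = g s)
    (hf : ContinuousAt (deriv f) t) (hg : ContinuousAt (deriv g) t) :
    deriv f t = deriv g t := by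
  have htT : t < T := ht.2
  have hderiv : ∀ s ∈ Ioo t T, deriv f s = deriv g s := by
    intro s hs
    have h0 : s ∈ Ioo (0:ℝ) T := ⟨lt_of_le_of_lt ht.1 hs.1, hs.2⟩
    have heq : f =ᶠ[nhds s] g := by
      filter_upwards [Ioo_mem_nhds h0.1 h0.2] with y hy using hfg y ⟨hy.1.le, hy.2⟩
    exact heq.deriv_eq
  haveI : (nhdsWithin t (Ioo t T)).NeBot := by
    apply mem_closure_iff_nhdsWithin_neBot.1
    rw [closure_Ioo htT.ne]; exact ⟨le_rfl, htT.le⟩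
  have h1 : Tendsto (deriv f) (nhdsWithin t (Ioo t T)) (nhds (deriv f t)) :=
    hf.tendsto.mono_left nhdsWithin_le_nhds
  have h2 : Tendsto (deriv g) (nhdsWithin t (Ioo t T)) (nhds (deriv g t)) :=
    hg.tendsto.mono_left nhdsWithin_le_nhds
  have h3 : Tendsto (deriv f) (nhdsWithin t (Ioo t T)) (nhds (deriv g t)) := by
    apply h2.congr'
    filter_upwards [eventually_mem_nhdsWithin] with s hs using (hderiv s hs).symm
  exact tendsto_nhds_unique h1 h3

lemma partial1 (f : ℝ → ℝ → E) (hf : Differentiable ℝ (fun p : ℝ × ℝ => f p.1 p.2)) (s y : ℝ) :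
    HasDerivAt (fun s' => f s' y) (fderiv ℝ (fun p : ℝ × ℝ => f p.1 p.2) (s, y) (1, 0)) s := by
  have h1 : HasFDerivAt (fun p : ℝ × ℝ => f p.1 p.2)
      (fderiv ℝ (fun p : ℝ × ℝ => f p.1 p.2) (s, y)) (s, y) := (hf _).hasFDerivAt
  have h2 : HasDerivAt (fun s' : ℝ => ((s', y) : ℝ × ℝ)) ((1 : ℝ), (0 : ℝ)) s :=
    (hasDerivAt_id s).prodMk (hasDerivAt_const s y)
  exact h1.comp_hasDerivAt s h2

lemma partial2 (f : ℝ → ℝ → E) (hf : Differentiable ℝ (fun p : ℝ × ℝ => f p.1 p.2)) (s y : ℝ) :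
    HasDerivAt (fun y' => f s y') (fderiv ℝ (fun p : ℝ × ℝ => f p.1 p.2) (s, y) (0, 1)) y := by
  have h1 : HasFDerivAt (fun p : ℝ × ℝ => f p.1 p.2)
      (fderiv ℝ (fun p : ℝ × ℝ => f p.1 p.2) (s, y)) (s, y) := (hf _).hasFDerivAt
  have h2 : HasDerivAt (fun y' : ℝ => ((s, y') : ℝ × ℝ)) ((0 : ℝ), (1 : ℝ)) y :=
    (hasDerivAt_const y s).prodMk (hasDerivAt_id y)
  exact h1.comp_hasDerivAt y h2

lemma clairaut (f : ℝ → ℝ → E) (hf : ContDiff ℝ (⊤ : ℕ∞) (fun p : ℝ × ℝ => f p.1 p.2))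
    (t x : ℝ) :
    deriv (fun y => deriv (fun s => f s y) t) x
      = deriv (fun s => deriv (fun y => f s y) x) t := by
  set F : ℝ × ℝ → E := fun p : ℝ × ℝ => f p.1 p.2 with hF
  have hd : Differentiable ℝ F := hf.differentiable (by simp)
  have hfd : ContDiff ℝ (1 : ℕ) (fderiv ℝ F) := by
    apply hf.fderiv_right
    exact_mod_cast topLe 2
  have hd1 : Differentiable ℝ (fderiv ℝ F) := hfd.differentiable (by simp)
  set f'' := fderiv ℝ (fderiv ℝ F) (t, x) with hf''
  have hsymm : ∀ v w, f'' v w = f'' w v :=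
    second_derivative_symmetric (fun y => (hd y).hasFDerivAt) ((hd1 _).hasFDerivAt)
  have hmix : ∀ (v : ℝ × ℝ),
      HasDerivAt (fun y : ℝ => fderiv ℝ F (t, y) v) (f'' (0, 1) v) x := by
    intro v
    have hc : HasDerivAt (fun y : ℝ => fderiv ℝ F (t, y)) (f'' (0, 1)) x := by
      have h1 : HasFDerivAt (fderiv ℝ F) f'' (t, x) := (hd1 _).hasFDerivAt
      have h2 : HasDerivAt (fun y : ℝ => ((t, y) : ℝ × ℝ)) ((0 : ℝ), (1 : ℝ)) x :=
        (hasDerivAt_const x t).prodMk (hasDerivAt_id x)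
      exact h1.comp_hasDerivAt x h2
    have := hc.clm_apply (hasDerivAt_const x v)
    simpa using this
  have hmix2 : ∀ (v : ℝ × ℝ),
      HasDerivAt (fun s : ℝ => fderiv ℝ F (s, x) v) (f'' (1, 0) v) t := by
    intro v
    have hc : HasDerivAt (fun s : ℝ => fderiv ℝ F (s, x)) (f'' (1, 0)) t := by
      have h1 : HasFDerivAt (fderiv ℝ F) f'' (t, x) := (hd1 _).hasFDerivAt
      have h2 : HasDerivAt (fun s : ℝ => ((s, x) : ℝ × ℝ)) ((1 : ℝ), (0 : ℝ)) t :=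
        (hasDerivAt_id t).prodMk (hasDerivAt_const t x)
      exact h1.comp_hasDerivAt t h2
    have := hc.clm_apply (hasDerivAt_const t v)
    simpa using this
  have e1 : (fun y => deriv (fun s => f s y) t) = fun y => fderiv ℝ F (t, y) (1, 0) := by
    funext y; exact (partial1 f hd t y).deriv
  have e2 : (fun s => deriv (fun y => f s y) x) = fun s => fderiv ℝ F (s, x) (0, 1) := by
    funext s; exact (partial2 f hd s x).deriv
  rw [e1, e2, (hmix (1, 0)).deriv, (hmix2 (0, 1)).deriv]
  exact hsymm _ _

end helpers

/-- the boundary relation `∂ₛ^⊥V = −τ₀ S_γ V` at the free boundary. -/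
theorem statement5
    (n : ℕ) (hn : 2 ≤ n) (T : ℝ) (hT : 0 < T)
    (ξ : EuclideanSpace ℝ (Fin n) → EuclideanSpace ℝ (Fin n))
    (hξ : ContDiff ℝ (⊤ : ℕ∞) ξ)
    (τ : ℝ → ℝ) (hτ : ∀ x ∈ ({-1, 1} : Set ℝ), τ x = 1 ∨ τ x = -1)
    (γ : ℝ → ℝ → EuclideanSpace ℝ (Fin n))
    (hγ : ContDiff ℝ (⊤ : ℕ∞) (fun p : ℝ × ℝ => γ p.1 p.2))
    (himm : ∀ t ∈ Ico (0:ℝ) T, ∀ x ∈ Icc (-1:ℝ) 1, deriv (γ t) x ≠ 0)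
    (hb1 : ∀ t ∈ Ico (0:ℝ) T, ∀ x ∈ ({-1, 1} : Set ℝ),
      ⟪timeD γ t x, utang (γ t) x⟫ = 0)
    (hb2 : ∀ t ∈ Ico (0:ℝ) T, ∀ x ∈ ({-1, 1} : Set ℝ),
      utang (γ t) x = τ x • ξ (γ t x)) :
    ∀ t ∈ Ico (0:ℝ) T, ∀ x ∈ ({-1, 1} : Set ℝ),
      aderivP (γ t) (normalVel γ t) x
        = -(τ x • shapeOp ξ (γ t x) (normalVel γ t x)) := by
  intro t ht x hx
  have hx' : x = -1 ∨ x = 1 := by simpa using hx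
  have hxIcc : x ∈ Icc (-1:ℝ) 1 := by rcases hx' with h | h <;> simp [h]
  have hτx : τ x = 1 ∨ τ x = -1 := hτ x hx
  have hτ2 : τ x * τ x = 1 := by rcases hτx with h | h <;> rw [h] <;> norm_num
  have hd : Differentiable ℝ (fun p : ℝ × ℝ => γ p.1 p.2) :=
    hγ.differentiable (by simp)
  -- joint smoothness of the fderiv
  have hfdF : ContDiff ℝ ((⊤ : ℕ∞)) (fderiv ℝ (fun p : ℝ × ℝ => γ p.1 p.2)) := by
    apply hγ.fderiv_right
    exact le_of_eq ENat.coe_top_add_one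
  have hfdv : ∀ v : ℝ × ℝ, ContDiff ℝ ((⊤ : ℕ∞))
      (fun p : ℝ × ℝ => fderiv ℝ (fun q : ℝ × ℝ => γ q.1 q.2) p v) :=
    fun v => hfdF.clm_apply contDiff_const
  -- the boundary trajectory
  have hG : ContDiff ℝ ((⊤ : ℕ∞)) (fun s => γ s x) :=
    hγ.comp (contDiff_id.prodMk contDiff_const)
  -- identification of partial derivatives
  have e_td : timeD γ t = fun y => fderiv ℝ (fun q : ℝ × ℝ => γ q.1 q.2) (t, y) (1, 0) :=
    funext fun y => (partial1 γ hd t y).deriv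
  have e_Fd : (fun s => deriv (γ s) x)
      = fun s => fderiv ℝ (fun q : ℝ × ℝ => γ q.1 q.2) (s, x) (0, 1) :=
    funext fun s => (partial2 γ hd s x).deriv
  have e_gd : ∀ y, deriv (γ t) y = fderiv ℝ (fun q : ℝ × ℝ => γ q.1 q.2) (t, y) (0, 1) :=
    fun y => (partial2 γ hd t y).deriv
  -- smoothness of the various one-variable functions
  have htd_s : ContDiff ℝ ((⊤ : ℕ∞)) (timeD γ t) := by
    rw [e_td]; exact (hfdv (1, 0)).comp (contDiff_const.prodMk contDiff_id)
  have hFd_s : ContDiff ℝ ((⊤ : ℕ∞)) (fun s => deriv (γ s) x) := by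
    rw [e_Fd]; exact (hfdv (0, 1)).comp (contDiff_id.prodMk contDiff_const)
  have hgd_s : ContDiff ℝ ((⊤ : ℕ∞)) (fun y => deriv (γ t) y) := by
    have : (fun y => deriv (γ t) y)
        = fun y => fderiv ℝ (fun q : ℝ × ℝ => γ q.1 q.2) (t, y) (0, 1) := funext e_gd
    rw [this]; exact (hfdv (0, 1)).comp (contDiff_const.prodMk contDiff_id)
  -- nonvanishing
  have hgx0 : deriv (γ t) x ≠ 0 := himm t ht x hxIcc
  have hρt_pos : (0:ℝ) < ‖deriv (γ t) x‖ := norm_pos_iff.2 hgx0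
  have hρt_ne : ‖deriv (γ t) x‖ ≠ 0 := ne_of_gt hρt_pos
  -- boundary conditions at time t
  have hb1t : ⟪timeD γ t x, utang (γ t) x⟫ = 0 := hb1 t ht x hx
  have hb2t : utang (γ t) x = τ x • ξ (γ t x) := hb2 t ht x hx
  -- unit norms
  have hunit : ∀ s ∈ Ico (0:ℝ) T, ‖utang (γ s) x‖ = 1 := by
    intro s hs
    have hne : deriv (γ s) x ≠ 0 := himm s hs x hxIcc
    show ‖‖deriv (γ s) x‖⁻¹ • deriv (γ s) x‖ = 1
    rw [norm_smul, norm_inv, norm_norm, inv_mul_cancel₀ (norm_ne_zero_iff.2 hne)]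
  have hξ1 : ∀ s ∈ Ico (0:ℝ) T, ‖ξ (γ s x)‖ = 1 := by
    intro s hs
    have h2 := hb2 s hs x hx
    have h3 : ‖utang (γ s) x‖ = ‖τ x • ξ (γ s x)‖ := by rw [h2]
    rw [hunit s hs, norm_smul] at h3
    have habs : ‖τ x‖ = 1 := by rcases hτx with h | h <;> rw [h] <;> simp
    rw [habs, one_mul] at h3
    exact h3.symm
  have hξξ : ⟪ξ (γ t x), ξ (γ t x)⟫ = 1 := by
    rw [real_inner_self_eq_norm_mul_norm, hξ1 t ht, one_mul]
  have huu : ⟪utang (γ t) x, utang (γ t) x⟫ = 1 := by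
    rw [real_inner_self_eq_norm_mul_norm, hunit t ht, one_mul]
  have hξu : ⟪ξ (γ t x), utang (γ t) x⟫ = τ x := by
    rw [hb2t, real_inner_smul_right, hξξ, mul_one]
  -- the time-derivative of the spatial derivative along the boundary
  have hρat : ContDiffAt ℝ ((⊤ : ℕ∞)) (fun s => ‖deriv (γ s) x‖) t :=
    hFd_s.contDiffAt.norm ℝ hgx0
  have hρd : HasDerivAt (fun s => ‖deriv (γ s) x‖) (deriv (fun s => ‖deriv (γ s) x‖) t) t :=
    (hρat.differentiableAt (by simp)).hasDerivAt
  have hGd : HasDerivAt (fun s => γ s x) (timeD γ t x) t :=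
    (hG.differentiable (by simp) t).hasDerivAt
  have hvec : HasDerivAt (fun s => ξ (γ s x))
      (fderiv ℝ ξ (γ t x) (timeD γ t x)) t := by
    have h1 : HasFDerivAt ξ (fderiv ℝ ξ (γ t x)) (γ t x) :=
      (hξ.differentiable (by simp) (γ t x)).hasFDerivAt
    exact h1.comp_hasDerivAt t hGd
  set ρ' := deriv (fun s => ‖deriv (γ s) x‖) t with hρ'def
  set M := fderiv ℝ ξ (γ t x) (timeD γ t x) with hMdef
  have hRd : HasDerivAt (fun s => (τ x * ‖deriv (γ s) x‖) • ξ (γ s x))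
      ((τ x * ‖deriv (γ t) x‖) • M + (τ x * ρ') • ξ (γ t x)) t := by
    have hsc : HasDerivAt (fun s => τ x * ‖deriv (γ s) x‖) (τ x * ρ') t :=
      hρd.const_mul (τ x)
    exact hsc.smul hvec
  have hFR : ∀ s ∈ Ico (0:ℝ) T,
      deriv (γ s) x = (τ x * ‖deriv (γ s) x‖) • ξ (γ s x) := by
    intro s hs
    have hne : deriv (γ s) x ≠ 0 := himm s hs x hxIcc
    have h2 : ‖deriv (γ s) x‖⁻¹ • deriv (γ s) x = τ x • ξ (γ s x) := hb2 s hs x hx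
    have h3 : ‖deriv (γ s) x‖ • (‖deriv (γ s) x‖⁻¹ • deriv (γ s) x) = deriv (γ s) x :=
      smul_inv_smul₀ (norm_ne_zero_iff.2 hne) _
    rw [h2] at h3
    calc deriv (γ s) x = ‖deriv (γ s) x‖ • τ x • ξ (γ s x) := h3.symm
      _ = (τ x * ‖deriv (γ s) x‖) • ξ (γ s x) := by rw [smul_smul, mul_comm]
  have hRat : ContDiffAt ℝ ((⊤ : ℕ∞)) (fun s => (τ x * ‖deriv (γ s) x‖) • ξ (γ s x)) t := by
    exact (contDiffAt_const.mul hρat).smul ((hξ.contDiffAt).comp t hG.contDiffAt)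
  have hW : deriv (fun s => deriv (γ s) x) t
      = (τ x * ‖deriv (γ t) x‖) • M + (τ x * ρ') • ξ (γ t x) := by
    rw [deriv_congr_Ico _ _ T t ht hFR (contAt_deriv _ t hFd_s.contDiffAt)
      (contAt_deriv _ t hRat), hRd.deriv]
  -- orthogonality of M and ξ
  have hMξ : ⟪M, ξ (γ t x)⟫ = 0 := by
    have hq1 : ∀ s ∈ Ico (0:ℝ) T, ⟪ξ (γ s x), ξ (γ s x)⟫ = (1:ℝ) := by
      intro s hs
      rw [real_inner_self_eq_norm_mul_norm, hξ1 s hs, one_mul]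
    have hqd : HasDerivAt (fun s => ⟪ξ (γ s x), ξ (γ s x)⟫)
        (⟪ξ (γ t x), M⟫ + ⟪M, ξ (γ t x)⟫) t := hvec.inner ℝ hvec
    have hqsm : ContDiff ℝ ((⊤ : ℕ∞)) (fun s => ⟪ξ (γ s x), ξ (γ s x)⟫) :=
      ContDiff.inner ℝ (hξ.comp hG) (hξ.comp hG)
    have hconst : ContinuousAt (deriv (fun _ : ℝ => (1:ℝ))) t := by
      simp only [deriv_const']; exact continuousAt_const
    have h0 : deriv (fun s => ⟪ξ (γ s x), ξ (γ s x)⟫) t = deriv (fun _ : ℝ => (1:ℝ)) t :=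
      deriv_congr_Ico _ _ T t ht hq1 (contAt_deriv _ t hqsm.contDiffAt) hconst
    rw [hqd.deriv, deriv_const] at h0
    linarith [real_inner_comm M (ξ (γ t x)), h0]
  have hMu : ⟪M, utang (γ t) x⟫ = 0 := by
    rw [hb2t, real_inner_smul_right, hMξ, mul_zero]
  -- Clairaut: switch space and time derivatives
  have hCl : deriv (timeD γ t) x = deriv (fun s => deriv (γ s) x) t := clairaut γ hγ t x
  -- spatial differentiability at x
  have htdat : DifferentiableAt ℝ (timeD γ t) x :=
    htd_s.differentiable (by simp) x
  have hgdat : DifferentiableAt ℝ (fun y => deriv (γ t) y) x :=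
    hgd_s.differentiable (by simp) x
  have hnormat : DifferentiableAt ℝ (fun y => ‖deriv (γ t) y‖) x := hgdat.norm ℝ hgx0
  have hinvat : DifferentiableAt ℝ (fun y => ‖deriv (γ t) y‖⁻¹) x := hnormat.inv hρt_ne
  have hutat : DifferentiableAt ℝ (utang (γ t)) x := by
    have : utang (γ t) = fun y => ‖deriv (γ t) y‖⁻¹ • deriv (γ t) y := rfl
    rw [this]; exact hinvat.smul hgdat
  have hφat : DifferentiableAt ℝ (tanSpeed γ t) x := by
    have : tanSpeed γ t = fun y => ⟪timeD γ t y, utang (γ t) y⟫ := rfl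
    rw [this]; exact htdat.inner ℝ hutat
  set c := deriv (tanSpeed γ t) x with hcdef
  set W := deriv (timeD γ t) x with hWdef
  have hVd : HasDerivAt (normalVel γ t) (W - c • utang (γ t) x) x := by
    have h1 : HasDerivAt (fun y => tanSpeed γ t y • utang (γ t) y)
        (tanSpeed γ t x • deriv (utang (γ t)) x + c • utang (γ t) x) x :=
      (hφat.hasDerivAt).smul (hutat.hasDerivAt)
    have h2 : tanSpeed γ t x = 0 := hb1t
    rw [h2, zero_smul, zero_add] at h1
    exact (htdat.hasDerivAt).sub h1
  -- final computation
  have hnv : normalVel γ t x = timeD γ t x := by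
    show timeD γ t x - tanSpeed γ t x • utang (γ t) x = timeD γ t x
    have h2 : tanSpeed γ t x = 0 := hb1t
    rw [h2, zero_smul, sub_zero]
  show nperp (γ t) (aderiv (γ t) (normalVel γ t)) x
      = -(τ x • shapeOp ξ (γ t x) (normalVel γ t x))
  have hAder : aderiv (γ t) (normalVel γ t) x
      = ‖deriv (γ t) x‖⁻¹ • (W - c • utang (γ t) x) := by
    show ‖deriv (γ t) x‖⁻¹ • deriv (normalVel γ t) x = _
    rw [hVd.deriv]
  show aderiv (γ t) (normalVel γ t) x
      - ⟪aderiv (γ t) (normalVel γ t) x, utang (γ t) x⟫ • utang (γ t) x = _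
  rw [hAder, hnv]
  have hWform : W = (τ x * ‖deriv (γ t) x‖) • M + (τ x * ρ') • ξ (γ t x) := by
    rw [hCl]; exact hW
  have hWu : ⟪W, utang (γ t) x⟫ = ρ' := by
    rw [hWform, inner_add_left, real_inner_smul_left, real_inner_smul_left, hMu, hξu, mul_zero,
      zero_add]
    linear_combination ρ' * hτ2
  have hshape : shapeOp ξ (γ t x) (timeD γ t x) = -M := by
    show -(fderiv ℝ ξ (γ t x) (timeD γ t x)) = -M
    rw [hMdef]
  rw [hshape]
  have hinner2 : ⟪‖deriv (γ t) x‖⁻¹ • (W - c • utang (γ t) x), utang (γ t) x⟫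
      = ‖deriv (γ t) x‖⁻¹ * (ρ' - c) := by
    rw [real_inner_smul_left, inner_sub_left, real_inner_smul_left, hWu, huu, mul_one]
  rw [hinner2, hWform, hb2t]
  rw [smul_neg, neg_neg]
  match_scalars
  · field_simp
  · ring

end
end
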